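/- arXiv:1212.6157 — 6 statements merged into one kernel-verified Lean document; each statement's English description precedes it below -/
import Mathlib

section
/- Let R be a local principal ideal ring of length two with residue field k and reduction map r, let n be a positive integer and A ∈ M_n(k). Let G_A denote the centralizer of A in GL_n(k) and let H = r⁻¹(G_A) ⊆ GL_n(R). Then H acts by conjugation on the fibre r⁻¹(A) ⊆ M_n(R), and the map sending a similarity class 𝒞 of M_n(R) to 𝒞 ∩ r⁻¹(A) is a bijection from the set of similarity classes of M_n(R) whose image under r is contained in the similarity class of A onto the set of H-orbits in r⁻¹(A). -/
open Matrix IsLocalRing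

section Stmt1Aux
variable {R : Type*} [CommRing R] [IsLocalRing R] {n : ℕ}

private lemma myUnitMul (u : GL (Fin n) R) :
    ((u : Matrix (Fin n) (Fin n) R)).map (residue R) *
      ((u⁻¹ : GL (Fin n) R) : Matrix (Fin n) (Fin n) R).map (residue R) = 1 := by
  rw [← Matrix.map_mul]
  simp [← RingHom.mapMatrix_apply]

private lemma myUnitMul' (u : GL (Fin n) R) :
    ((u⁻¹ : GL (Fin n) R) : Matrix (Fin n) (Fin n) R).map (residue R) *
      ((u : Matrix (Fin n) (Fin n) R)).map (residue R) = 1 := by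
  rw [← Matrix.map_mul]
  simp [← RingHom.mapMatrix_apply]

/-- Lifting an invertible matrix over the residue field to `GL n R`. -/
private lemma myLift (h : GL (Fin n) (ResidueField R)) :
    ∃ g : GL (Fin n) R,
      ((g : Matrix (Fin n) (Fin n) R)).map (residue R)
        = (h : Matrix (Fin n) (Fin n) (ResidueField R)) := by
  obtain ⟨B, hB⟩ : ∃ B : Matrix (Fin n) (Fin n) R,
      B.map (residue R) = (h : Matrix (Fin n) (Fin n) (ResidueField R)) := by
    choose f hf using fun i j => Ideal.Quotient.mk_surjective
      ((h : Matrix (Fin n) (Fin n) (ResidueField R)) i j)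
    exact ⟨Matrix.of f, by ext i j; exact hf i j⟩
  have hdet : IsUnit B.det := by
    have h1 : IsUnit (residue R B.det) := by
      rw [RingHom.map_det]
      have : (residue R).mapMatrix B = (h : Matrix (Fin n) (Fin n) (ResidueField R)) := by
        simpa [RingHom.mapMatrix_apply] using hB
      rw [this]
      exact (isUnit_iff_isUnit_det _).mp h.isUnit
    exact isUnit_of_map_unit (residue R) _ h1
  obtain ⟨g, hg⟩ := (isUnit_iff_isUnit_det B).mpr hdet
  exact ⟨g, by rw [hg]; exact hB⟩

private lemma myLiftInv {h : GL (Fin n) (ResidueField R)} {g : GL (Fin n) R}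
    (hg : ((g : Matrix (Fin n) (Fin n) R)).map (residue R)
        = (h : Matrix (Fin n) (Fin n) (ResidueField R))) :
    ((g⁻¹ : GL (Fin n) R) : Matrix (Fin n) (Fin n) R).map (residue R)
        = (h⁻¹ : GL (Fin n) (ResidueField R)) := by
  calc ((g⁻¹ : GL (Fin n) R) : Matrix (Fin n) (Fin n) R).map (residue R)
      = ((g⁻¹ : GL (Fin n) R) : Matrix (Fin n) (Fin n) R).map (residue R) *
          ((h : Matrix (Fin n) (Fin n) (ResidueField R)) *
            (h⁻¹ : GL (Fin n) (ResidueField R))) := by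
        rw [← Units.val_mul, mul_inv_cancel, Units.val_one, mul_one]
    _ = (((g⁻¹ : GL (Fin n) R) : Matrix (Fin n) (Fin n) R).map (residue R) *
          ((g : Matrix (Fin n) (Fin n) R)).map (residue R)) *
          (h⁻¹ : GL (Fin n) (ResidueField R)) := by
        rw [hg, mul_assoc]
    _ = (h⁻¹ : GL (Fin n) (ResidueField R)) := by rw [myUnitMul', one_mul]

private lemma myClassEq (𝔸 : Matrix (Fin n) (Fin n) R) (g : GL (Fin n) R) :
    {X : Matrix (Fin n) (Fin n) R | ∃ u : GL (Fin n) R,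
        X = (u : Matrix (Fin n) (Fin n) R) * 𝔸 * (u⁻¹ : GL (Fin n) R)} =
    {X | ∃ u : GL (Fin n) R,
        X = (u : Matrix (Fin n) (Fin n) R) *
          ((g : Matrix (Fin n) (Fin n) R) * 𝔸 * (g⁻¹ : GL (Fin n) R)) *
          (u⁻¹ : GL (Fin n) R)} := by
  ext X
  constructor
  · rintro ⟨u, rfl⟩
    refine ⟨u * g⁻¹, ?_⟩
    simp [Units.val_mul, mul_assoc]
  · rintro ⟨u, rfl⟩
    refine ⟨u * g, ?_⟩
    simp [Units.val_mul, mul_assoc]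

private lemma myFiber (A : Matrix (Fin n) (Fin n) (ResidueField R))
    (𝔸 : Matrix (Fin n) (Fin n) R) (h𝔸 : 𝔸.map (residue R) = A) :
    {X : Matrix (Fin n) (Fin n) R | ∃ u : GL (Fin n) R,
        X = (u : Matrix (Fin n) (Fin n) R) * 𝔸 * (u⁻¹ : GL (Fin n) R)} ∩
      {B : Matrix (Fin n) (Fin n) R | B.map (residue R) = A} =
    {B | ∃ g : GL (Fin n) R,
        ((g : Matrix (Fin n) (Fin n) R).map (residue R)) * A =
          A * ((g : Matrix (Fin n) (Fin n) R).map (residue R)) ∧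
        B = (g : Matrix (Fin n) (Fin n) R) * 𝔸 * (g⁻¹ : GL (Fin n) R)} := by
  ext X
  constructor
  · rintro ⟨⟨u, rfl⟩, hr⟩
    refine ⟨u, ?_, rfl⟩
    simp only [Set.mem_setOf_eq, Matrix.map_mul, h𝔸] at hr
    calc (u : Matrix (Fin n) (Fin n) R).map (residue R) * A
        = ((u : Matrix (Fin n) (Fin n) R).map (residue R) * A *
            ((u⁻¹ : GL (Fin n) R) : Matrix (Fin n) (Fin n) R).map (residue R)) *
            (u : Matrix (Fin n) (Fin n) R).map (residue R) := by
          rw [mul_assoc _ _ ((u : Matrix (Fin n) (Fin n) R).map (residue R)),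
            myUnitMul' u, mul_one]
      _ = A * (u : Matrix (Fin n) (Fin n) R).map (residue R) := by rw [hr]
  · rintro ⟨g, hc, rfl⟩
    refine ⟨⟨g, rfl⟩, ?_⟩
    simp only [Set.mem_setOf_eq, Matrix.map_mul, h𝔸]
    rw [hc, mul_assoc, myUnitMul g, mul_one]

/-- From a class in the source set, produce an element of the fibre inside it,
together with the fact that the class is the similarity class of that element. -/
private lemma mySource (A : Matrix (Fin n) (Fin n) (ResidueField R))
    {C : Set (Matrix (Fin n) (Fin n) R)}
    (hC : (∃ 𝔸, C = {B | ∃ g : GL (Fin n) R,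
            B = (g : Matrix (Fin n) (Fin n) R) * 𝔸 * (g⁻¹ : GL (Fin n) R)}) ∧
        ∀ B ∈ C, ∃ h : GL (Fin n) (ResidueField R),
          B.map (residue R) =
            (h : Matrix (Fin n) (Fin n) (ResidueField R)) * A *
              (h⁻¹ : GL (Fin n) (ResidueField R))) :
    ∃ 𝔸', 𝔸'.map (residue R) = A ∧
      C = {B | ∃ g : GL (Fin n) R,
          B = (g : Matrix (Fin n) (Fin n) R) * 𝔸' * (g⁻¹ : GL (Fin n) R)} := by
  obtain ⟨⟨𝔸, rfl⟩, hred⟩ := hC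
  have h𝔸mem : 𝔸 ∈ {B | ∃ g : GL (Fin n) R,
      B = (g : Matrix (Fin n) (Fin n) R) * 𝔸 * (g⁻¹ : GL (Fin n) R)} := ⟨1, by simp⟩
  obtain ⟨h, hh⟩ := hred 𝔸 h𝔸mem
  obtain ⟨g₀, hg₀⟩ := myLift h
  refine ⟨((g₀⁻¹ : GL (Fin n) R) : Matrix (Fin n) (Fin n) R) * 𝔸 *
      (((g₀⁻¹)⁻¹ : GL (Fin n) R) : Matrix (Fin n) (Fin n) R), ?_, ?_⟩
  · have hinv := myLiftInv hg₀
    rw [inv_inv]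
    rw [Matrix.map_mul, Matrix.map_mul, hinv, hg₀, hh]
    calc (h⁻¹ : GL (Fin n) (ResidueField R)) *
          ((h : Matrix (Fin n) (Fin n) (ResidueField R)) * A *
            (h⁻¹ : GL (Fin n) (ResidueField R))) *
          (h : Matrix (Fin n) (Fin n) (ResidueField R))
        = ((h⁻¹ : GL (Fin n) (ResidueField R)) *
            (h : Matrix (Fin n) (Fin n) (ResidueField R))) * A *
          ((h⁻¹ : GL (Fin n) (ResidueField R)) *
            (h : Matrix (Fin n) (Fin n) (ResidueField R))) := by
          simp only [mul_assoc]
      _ = A := by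
          rw [← Units.val_mul, inv_mul_cancel, Units.val_one, one_mul, mul_one]
  · exact myClassEq 𝔸 g₀⁻¹

end Stmt1Aux

/-- Let `R` be a local principal ideal ring of length two with residue
field `k` and reduction map `r`, let `n` be a positive integer and `A ∈ Mₙ(k)`.  The map
sending a similarity class `𝒞` of `Mₙ(R)` to `𝒞 ∩ r⁻¹(A)` is a bijection from the set of
similarity classes of `Mₙ(R)` whose image under `r` is contained in the similarity class
of `A` onto the set of orbits of `H = r⁻¹(G_A)` (acting by conjugation) in the fibre
`r⁻¹(A)`, where `G_A` is the centralizer of `A` in `GLₙ(k)`. -/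
theorem stmt1 {R : Type*} [CommRing R] [IsLocalRing R]
    (hprinc : (maximalIdeal R).IsPrincipal) (hne : maximalIdeal R ≠ ⊥)
    (hsq : maximalIdeal R ^ 2 = ⊥) (n : ℕ) (hn : 0 < n)
    (A : Matrix (Fin n) (Fin n) (ResidueField R)) :
    Set.BijOn
      (fun C => C ∩ {B : Matrix (Fin n) (Fin n) R | B.map (residue R) = A})
      -- similarity classes of `Mₙ(R)` whose image under `r` is contained in the
      -- similarity class of `A`
      {C : Set (Matrix (Fin n) (Fin n) R) |
        (∃ 𝔸, C = {B | ∃ g : GL (Fin n) R,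
            B = (g : Matrix (Fin n) (Fin n) R) * 𝔸 * (g⁻¹ : GL (Fin n) R)}) ∧
        ∀ B ∈ C, ∃ h : GL (Fin n) (ResidueField R),
          B.map (residue R) =
            (h : Matrix (Fin n) (Fin n) (ResidueField R)) * A *
              (h⁻¹ : GL (Fin n) (ResidueField R))}
      -- orbits of `H = r⁻¹(G_A)` in the fibre `r⁻¹(A)`
      {O : Set (Matrix (Fin n) (Fin n) R) |
        ∃ 𝔸, 𝔸.map (residue R) = A ∧
          O = {B | ∃ g : GL (Fin n) R,
            ((g : Matrix (Fin n) (Fin n) R).map (residue R)) * A =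
              A * ((g : Matrix (Fin n) (Fin n) R).map (residue R)) ∧
            B = (g : Matrix (Fin n) (Fin n) R) * 𝔸 * (g⁻¹ : GL (Fin n) R)}} := by
  constructor
  · -- MapsTo
    intro C hC
    obtain ⟨𝔸', h𝔸', rfl⟩ := mySource A hC
    exact ⟨𝔸', h𝔸', myFiber A 𝔸' h𝔸'⟩
  constructor
  · -- InjOn
    intro C hC C' hC' heq
    obtain ⟨𝔸, h𝔸, rfl⟩ := mySource A hC
    obtain ⟨𝔸', h𝔸', rfl⟩ := mySource A hC'
    have h𝔸mem : 𝔸 ∈ ({B | ∃ g : GL (Fin n) R,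
        B = (g : Matrix (Fin n) (Fin n) R) * 𝔸 * (g⁻¹ : GL (Fin n) R)} ∩
        {B : Matrix (Fin n) (Fin n) R | B.map (residue R) = A}) :=
      ⟨⟨1, by simp⟩, h𝔸⟩
    simp only at heq
    rw [heq] at h𝔸mem
    obtain ⟨⟨u, hu⟩, _⟩ := h𝔸mem
    rw [hu]
    exact (myClassEq 𝔸' u).symm
  · -- SurjOn
    rintro O ⟨𝔸, h𝔸, rfl⟩
    refine ⟨{B | ∃ g : GL (Fin n) R,
        B = (g : Matrix (Fin n) (Fin n) R) * 𝔸 * (g⁻¹ : GL (Fin n) R)}, ⟨⟨𝔸, rfl⟩, ?_⟩, ?_⟩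
    · rintro B ⟨g, rfl⟩
      refine ⟨Units.map ((residue R).mapMatrix).toMonoidHom g, ?_⟩
      have h1 : ((Units.map ((residue R).mapMatrix).toMonoidHom g :
          GL (Fin n) (ResidueField R)) : Matrix (Fin n) (Fin n) (ResidueField R)) =
          ((g : Matrix (Fin n) (Fin n) R)).map (residue R) := rfl
      have h2 := myLiftInv (h := Units.map ((residue R).mapMatrix).toMonoidHom g)
        (g := g) h1.symm
      rw [Matrix.map_mul, Matrix.map_mul, h𝔸, h1, h2]
    · exact myFiber A 𝔸 h𝔸
end

section
/- Let R be a local principal ideal ring of length two. Then every matrix A ∈ M_2(R) is similar to its transpose, i.e., there exists g ∈ GL_2(R) with g A g⁻¹ = Aᵀ. -/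
open Matrix IsLocalRing

private lemma key2 {R : Type*} [CommRing R] (a b c d x y z : R)
    (hdet : IsUnit (x * z - y * y)) (hcond : x * b + y * (d - a) = z * c) :
    ∃ g : GL (Fin 2) R,
      (g : Matrix (Fin 2) (Fin 2) R) * !![a, b; c, d] * (g⁻¹ : GL (Fin 2) R)
        = !![a, b; c, d].transpose := by
  set M : Matrix (Fin 2) (Fin 2) R := !![x, y; y, z] with hMdef
  have hM : IsUnit M.det := by
    simpa [hMdef, Matrix.det_fin_two_of] using hdet
  obtain ⟨u, hu⟩ := (Matrix.isUnit_iff_isUnit_det M).mpr hM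
  have htr : !![a, b; c, d].transpose = !![a, c; b, d] := by
    ext i j; fin_cases i <;> fin_cases j <;> rfl
  have hMA : M * !![a, b; c, d] = !![a, b; c, d].transpose * M := by
    rw [htr]
    ext i j
    fin_cases i <;> fin_cases j <;>
      simp [hMdef, Matrix.mul_apply, Fin.sum_univ_two] <;>
      first
        | linear_combination hcond
        | linear_combination -hcond
        | linear_combination (-2 : R) * hcond
        | linear_combination (2 : R) * hcond
        | ring
  refine ⟨u, ?_⟩
  show (↑u : Matrix (Fin 2) (Fin 2) R) * !![a, b; c, d] * (↑(u⁻¹) : Matrix (Fin 2) (Fin 2) R)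
      = !![a, b; c, d].transpose
  calc (↑u : Matrix (Fin 2) (Fin 2) R) * !![a, b; c, d] * (↑(u⁻¹) : Matrix (Fin 2) (Fin 2) R)
      = !![a, b; c, d].transpose * ↑u * (↑(u⁻¹) : Matrix (Fin 2) (Fin 2) R) := by
        rw [hu, hMA]
    _ = !![a, b; c, d].transpose := by
        rw [mul_assoc, ← Units.val_mul, mul_inv_cancel, Units.val_one, mul_one]

/-- Over a local principal ideal ring `R` of length two, every `2 × 2`
matrix is similar to its transpose. -/
theorem stmt4 {R : Type*} [CommRing R] [IsLocalRing R]
    (hprinc : (maximalIdeal R).IsPrincipal) (hne : maximalIdeal R ≠ ⊥)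
    (hsq : maximalIdeal R ^ 2 = ⊥) (A : Matrix (Fin 2) (Fin 2) R) :
    ∃ g : GL (Fin 2) R,
      (g : Matrix (Fin 2) (Fin 2) R) * A * (g⁻¹ : GL (Fin 2) R) = A.transpose := by
  have hzero : ∀ p q : R, p ∈ maximalIdeal R → q ∈ maximalIdeal R → p * q = 0 := by
    intro p q hp hq
    have : p * q ∈ maximalIdeal R ^ 2 := by
      rw [pow_two]; exact Ideal.mul_mem_mul hp hq
    rw [hsq] at this
    simpa using this
  set a := A 0 0 with ha
  set b := A 0 1 with hb
  set c := A 1 0 with hc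
  set d := A 1 1 with hd
  have hA : A = !![a, b; c, d] := by
    rw [ha, hb, hc, hd]; exact Matrix.etaExpand_eq A ▸ rfl
  rw [hA]
  by_cases hub : IsUnit b
  · refine key2 a b c d ((a - d) * ↑hub.unit⁻¹) 1 0 (by simpa using isUnit_one.neg) ?_
    have : (↑hub.unit⁻¹ : R) * b = 1 := hub.val_inv_mul
    linear_combination (a - d) * this
  by_cases huc : IsUnit c
  · refine key2 a b c d 0 1 ((d - a) * ↑huc.unit⁻¹) (by simpa using isUnit_one.neg) ?_
    have : (↑huc.unit⁻¹ : R) * c = 1 := huc.val_inv_mul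
    linear_combination -(d - a) * this
  have hbm : b ∈ maximalIdeal R := hub
  have hcm : c ∈ maximalIdeal R := huc
  by_cases huda : IsUnit (d - a)
  · set y := (c - b) * ↑huda.unit⁻¹ with hy
    have hym : y ∈ maximalIdeal R := Ideal.mul_mem_right _ _ (Ideal.sub_mem _ hcm hbm)
    refine key2 a b c d 1 y 1 ?_ ?_
    · have : y * y = 0 := hzero y y hym hym
      rw [this]; simpa using isUnit_one
    · have h1 : (↑huda.unit⁻¹ : R) * (d - a) = 1 := huda.val_inv_mul
      linear_combination (c - b) * h1
  have hdam : d - a ∈ maximalIdeal R := huda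
  obtain ⟨π, hπ⟩ := hprinc
  have hπm : π ∈ maximalIdeal R := hπ ▸ Ideal.mem_span_singleton_self π
  have hspan : ∀ p : R, p ∈ maximalIdeal R → π ∣ p := by
    intro p hp
    rw [hπ] at hp
    exact Ideal.mem_span_singleton.mp hp
  obtain ⟨β, hβ⟩ := hspan b hbm
  obtain ⟨γ, hγ⟩ := hspan c hcm
  obtain ⟨δ, hδ⟩ := hspan (d - a) hdam
  by_cases huβ : IsUnit β
  · refine key2 a b c d (-δ * ↑huβ.unit⁻¹) 1 0 (by simpa using isUnit_one.neg) ?_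
    have h1 : (↑huβ.unit⁻¹ : R) * β = 1 := huβ.val_inv_mul
    rw [hβ, hδ]
    linear_combination (-δ * π) * h1
  by_cases huγ : IsUnit γ
  · refine key2 a b c d 0 1 (δ * ↑huγ.unit⁻¹) (by simpa using isUnit_one.neg) ?_
    have h1 : (↑huγ.unit⁻¹ : R) * γ = 1 := huγ.val_inv_mul
    rw [hγ, hδ]
    linear_combination (-δ * π) * h1
  · have hb0 : b = 0 := by rw [hβ]; exact hzero π β hπm huβ
    have hc0 : c = 0 := by rw [hγ]; exact hzero π γ hπm huγ
    refine key2 a b c d 1 0 1 (by simpa using isUnit_one) ?_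
    rw [hb0, hc0]; ring
end

section
/- Let R be a local principal ideal ring of length two and let n ≥ 3 be an integer. Then there exists a matrix A ∈ M_n(R) which is not similar to its transpose, i.e., there is no g ∈ GL_n(R) with g A g⁻¹ = Aᵀ. -/
open Matrix IsLocalRing

/-- Over a local principal ideal ring `R` of length two, for every
`n ≥ 3` there exists an `n × n` matrix which is not similar to its transpose. -/
theorem stmt5 {R : Type*} [CommRing R] [IsLocalRing R]
    (hprinc : (maximalIdeal R).IsPrincipal) (hne : maximalIdeal R ≠ ⊥)
    (hsq : maximalIdeal R ^ 2 = ⊥) (n : ℕ) (hn : 3 ≤ n) :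
    ∃ A : Matrix (Fin n) (Fin n) R,
      ¬ ∃ g : GL (Fin n) R,
        (g : Matrix (Fin n) (Fin n) R) * A * (g⁻¹ : GL (Fin n) R) = A.transpose := by
  obtain ⟨π, hπ⟩ := hprinc
  have hπmem : π ∈ maximalIdeal R := hπ ▸ Ideal.subset_span rfl
  have hπne : π ≠ 0 := by
    rintro rfl
    exact hne (by simp [hπ])
  have hπ2 : π * π = 0 := by
    have : π * π ∈ maximalIdeal R ^ 2 := by
      rw [pow_two]; exact Ideal.mul_mem_mul hπmem hπmem
    simpa [hsq] using this
  -- anything killed by π is in the maximal ideal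
  have hkill : ∀ x : R, π * x = 0 → x ∈ maximalIdeal R := by
    intro x hx
    by_contra hmem
    rw [mem_maximalIdeal, mem_nonunits_iff, not_not] at hmem
    obtain ⟨u, rfl⟩ := hmem
    exact hπne (by
      have : π * (↑u * ↑u⁻¹) = 0 := by rw [← mul_assoc, hx, zero_mul]
      simpa using this)
  set i0 : Fin n := ⟨0, by omega⟩
  set i1 : Fin n := ⟨1, by omega⟩
  set i2 : Fin n := ⟨2, by omega⟩
  have h01 : i0 ≠ i1 := by simp [i0, i1, Fin.ext_iff]
  have h02 : i0 ≠ i2 := by simp [i0, i2, Fin.ext_iff]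
  have h12 : i1 ≠ i2 := by simp [i1, i2, Fin.ext_iff]
  refine ⟨single i0 i1 1 + single i2 i0 π, ?_⟩
  rintro ⟨g, hgsim⟩
  set A : Matrix (Fin n) (Fin n) R := single i0 i1 1 + single i2 i0 π with hA
  -- transpose
  have hAT : A.transpose = single i1 i0 1 + single i0 i2 π := by
    ext i j
    simp only [Matrix.transpose_apply, hA, Matrix.add_apply, Matrix.single,
      Matrix.of_apply]
    by_cases h1 : i0 = j <;> by_cases h2 : i1 = i <;> by_cases h3 : i2 = j <;>
      by_cases h4 : i0 = i <;> simp [h1, h2, h3, h4]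
  -- from g A g⁻¹ = Aᵀ get g A = Aᵀ g
  have hg : (g : Matrix (Fin n) (Fin n) R) * A = A.transpose * g := by
    calc (g : Matrix (Fin n) (Fin n) R) * A
        = ((g : Matrix (Fin n) (Fin n) R) * A * (g⁻¹ : GL (Fin n) R)) * g := by
          rw [mul_assoc]
          norm_cast
          simp
      _ = A.transpose * g := by rw [hgsim]
  set G : Matrix (Fin n) (Fin n) R := (g : Matrix (Fin n) (Fin n) R) with hG
  -- entrywise equations
  have key : ∀ i j, (if j = i1 then G i i0 else 0) + (if j = i0 then G i i2 * π else 0)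
      = (if i = i1 then G i0 j else 0) + (if i = i0 then π * G i2 j else 0) := by
    intro i j
    have h := congrFun (congrFun hg i) j
    rw [hA, hAT] at h
    rw [Matrix.mul_add, Matrix.add_mul] at h
    have e1 : (G * single i0 i1 (1:R)) i j = if j = i1 then G i i0 else 0 := by
      by_cases hj : j = i1
      · subst hj; simp
      · simp [Matrix.mul_single_apply_of_ne (hbj := hj), hj]
    have e2 : (G * single i2 i0 π) i j = if j = i0 then G i i2 * π else 0 := by
      by_cases hj : j = i0
      · subst hj; simp
      · simp [Matrix.mul_single_apply_of_ne (hbj := hj), hj]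
    have e3 : (single i1 i0 (1:R) * G) i j = if i = i1 then G i0 j else 0 := by
      by_cases hi : i = i1
      · subst hi; simp
      · simp [Matrix.single_mul_apply_of_ne (h := hi), hi]
    have e4 : (single i0 i2 π * G) i j = if i = i0 then π * G i2 j else 0 := by
      by_cases hi : i = i0
      · subst hi; simp
      · simp [Matrix.single_mul_apply_of_ne (h := hi), hi]
    rw [Matrix.add_apply, Matrix.add_apply, e1, e2, e3, e4] at h
    exact h
  -- facts about the rows of G
  -- Row i0: G i0 j = 0 for j ≠ i0, i1; G i0 i0 ∈ m
  have row0_zero : ∀ j, j ≠ i0 → j ≠ i1 → G i0 j = 0 := by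
    intro j hj0 hj1
    have h := key i1 j
    simpa [hj0, hj1, h01.symm] using h.symm
  have row0_diag : G i0 i0 ∈ maximalIdeal R := by
    have h := key i1 i0
    simp [h01, h01.symm, h12.symm] at h
    rw [← h]
    exact Ideal.mul_mem_left _ _ hπmem
  -- Row i2: G i2 i0 = 0; G i2 j ∈ m for j ≠ i0, i1
  have row2_zero : G i2 i0 = 0 := by
    have h := key i2 i1
    simpa [h01.symm, h02.symm, h12.symm] using h
  have row2_mem : ∀ j, j ≠ i0 → j ≠ i1 → G i2 j ∈ maximalIdeal R := by
    intro j hj0 hj1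
    have h := key i0 j
    simp [hj0, hj1, h01] at h
    exact hkill _ h.symm
  -- determinant of G is in the maximal ideal
  have hdet : G.det ∈ maximalIdeal R := by
    rw [Matrix.det_apply']
    refine Ideal.sum_mem _ ?_
    intro σ _
    refine Ideal.mul_mem_left _ _ ?_
    -- find a factor in the maximal ideal
    by_cases h0 : σ⁻¹ i0 = i0
    · refine Ideal.mem_of_dvd _ (Finset.dvd_prod_of_mem _ (Finset.mem_univ i0)) ?_
      have hs : σ i0 = i0 := by have : σ (σ⁻¹ i0) = i0 := (by simp); rwa [h0] at this
      rw [hs]; exact row0_diag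
    · by_cases h1 : σ⁻¹ i0 = i1
      · -- σ i1 = i0; look at the factor in row i2
        by_cases h2 : σ⁻¹ i2 = i0
        · refine Ideal.mem_of_dvd _ (Finset.dvd_prod_of_mem _ (Finset.mem_univ i0)) ?_
          have hs : σ i0 = i2 := by have : σ (σ⁻¹ i2) = i2 := (by simp); rwa [h2] at this
          rw [hs, row2_zero]; exact Ideal.zero_mem _
        · refine Ideal.mem_of_dvd _ (Finset.dvd_prod_of_mem _ (Finset.mem_univ (σ⁻¹ i2))) ?_
          have hs : σ (σ⁻¹ i2) = i2 := by simp
          rw [hs]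
          exact row2_mem _ h2 (fun hcon => h02 (σ⁻¹.injective (h1.trans hcon.symm)))
      · -- σ⁻¹ i0 ∉ {i0, i1}: row0 entry is 0
        refine Ideal.mem_of_dvd _ (Finset.dvd_prod_of_mem _ (Finset.mem_univ (σ⁻¹ i0))) ?_
        have hs : σ (σ⁻¹ i0) = i0 := by simp
        rw [hs, row0_zero _ h0 h1]
        exact Ideal.zero_mem _
  -- but G is invertible, contradiction
  have hunit : IsUnit G.det := by
    have : IsUnit G := ⟨g, rfl⟩
    exact (Matrix.isUnit_iff_isUnit_det G).mp this
  exact mem_nonunits_iff.mp ((mem_maximalIdeal _).mp hdet) hunit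
end

section
/- Let R be a local principal ideal ring of length two with residue field k and reduction map r, let n be a positive integer, and let 𝔸 ∈ M_n(R) be such that A = r(𝔸) is regular, i.e., the minimal polynomial of A equals its characteristic polynomial. Then for every g ∈ GL_n(k) commuting with A there exists 𝐠 ∈ GL_n(R) commuting with 𝔸 such that r(𝐠) = g; that is, the reduction map from the centralizer of 𝔸 in GL_n(R) to the centralizer of A in GL_n(k) is surjective. -/
open Matrix IsLocalRing


open Polynomial Matrix UniqueFactorizationMonoid

section Cyclic

attribute [local instance] UniqueFactorizationMonoid.normalizationMonoid

open scoped Classical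

variable {k : Type*} [Field k] {n : ℕ}

/-- The annihilator ideal of a vector `v` under polynomials of `A`. -/
noncomputable def annI (A : Matrix (Fin n) (Fin n) k) (v : Fin n → k) : Ideal k[X] where
  carrier := {p | (aeval A p) *ᵥ v = 0}
  add_mem' := by
    intro p q hp hq
    simp only [Set.mem_setOf_eq, map_add, Matrix.add_mulVec] at *
    rw [hp, hq, add_zero]
  zero_mem' := by simp
  smul_mem' := by
    intro c p hp
    simp only [Set.mem_setOf_eq, smul_eq_mul, _root_.map_mul] at *
    rw [← Matrix.mulVec_mulVec, hp, Matrix.mulVec_zero]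

lemma mem_annI {A : Matrix (Fin n) (Fin n) k} {v : Fin n → k} {p : k[X]} :
    p ∈ annI A v ↔ (aeval A p) *ᵥ v = 0 := Iff.rfl

lemma annI_charpoly_mem (A : Matrix (Fin n) (Fin n) k) (v : Fin n → k) :
    A.charpoly ∈ annI A v := by
  rw [mem_annI, Matrix.aeval_self_charpoly, Matrix.zero_mulVec]


variable (A : Matrix (Fin n) (Fin n) k)

lemma charpoly_ne_zero : A.charpoly ≠ 0 := (Matrix.charpoly_monic A).ne_zero

/-- generator of the annihilator ideal -/
noncomputable def annG (v : Fin n → k) : k[X] :=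
  Submodule.IsPrincipal.generator (annI A v)

lemma annG_dvd_iff {v : Fin n → k} {p : k[X]} : annG A v ∣ p ↔ p ∈ annI A v :=
  (Submodule.IsPrincipal.mem_iff_generator_dvd _).symm

lemma annG_ne_zero (v : Fin n → k) : annG A v ≠ 0 := by
  intro h
  have h2 : A.charpoly ∈ annI A v := annI_charpoly_mem A v
  rw [← annG_dvd_iff, h, zero_dvd_iff] at h2
  exact charpoly_ne_zero A h2

lemma annG_dvd_charpoly (v : Fin n → k) : annG A v ∣ A.charpoly :=
  (annG_dvd_iff A).mpr (annI_charpoly_mem A v)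

lemma eq_zero_of_forall_mulVec {M : Matrix (Fin n) (Fin n) k}
    (h : ∀ v, M *ᵥ v = 0) : M = 0 := by
  ext i j
  have := congrFun (h (Pi.single j 1)) i
  simpa [Matrix.mulVec_single] using this

lemma key1 (hreg : minpoly k A = A.charpoly)
    (q : k[X]) (hq : q ∈ (normalizedFactors A.charpoly).toFinset) :
    ∃ v, annI A v = Ideal.span {q ^ (normalizedFactors A.charpoly).count q} := by
  set μ := A.charpoly with hμ
  set s := normalizedFactors μ with hs
  have hμ0 : μ ≠ 0 := charpoly_ne_zero A
  rw [Multiset.mem_toFinset] at hq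
  have hqprime : Prime q := prime_of_normalized_factor q hq
  have hqnorm : normalize q = q := normalize_normalized_factor q hq
  set e := s.count q with he
  -- first: find v with q^e ∣ annG A v
  have step1 : ∃ v, q ^ e ∣ annG A v := by
    by_contra hcon
    push_neg at hcon
    set N := (s.erase q).prod with hN
    have hsprime : ∀ r ∈ s, Prime r := fun r hr => prime_of_normalized_factor r hr
    have hN0 : N ≠ 0 := by
      rw [hN]
      apply Multiset.prod_ne_zero
      intro h0
      exact (hsprime 0 (Multiset.mem_of_mem_erase h0)).ne_zero rfl
    have hdvdN : ∀ v, annG A v ∣ N := by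
      intro v
      have hg0 : annG A v ≠ 0 := annG_ne_zero A v
      have hgμ : annG A v ∣ μ := annG_dvd_charpoly A v
      have hF : normalizedFactors (annG A v) ≤ s :=
        (dvd_iff_normalizedFactors_le_normalizedFactors hg0 hμ0).mp hgμ
      have hcount : (normalizedFactors (annG A v)).count q < e := by
        by_contra hge
        push_neg at hge
        apply hcon v
        have h1 : q ^ e ∣ (normalizedFactors (annG A v)).prod := by
          have : Multiset.replicate e q ≤ normalizedFactors (annG A v) :=
            Multiset.le_count_iff_replicate_le.mp hge
          calc q ^ e = (Multiset.replicate e q).prod := by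
                rw [Multiset.prod_replicate]
            _ ∣ _ := Multiset.prod_dvd_prod_of_le this
        exact h1.trans (prod_normalizedFactors hg0).dvd
      have hle : normalizedFactors (annG A v) ≤ s.erase q := by
        rw [Multiset.le_iff_count]
        intro a
        rcases eq_or_ne a q with rfl | hne
        · rw [Multiset.count_erase_self]
          omega
        · rw [Multiset.count_erase_of_ne hne]
          exact Multiset.le_iff_count.mp hF a
      calc annG A v ∣ (normalizedFactors (annG A v)).prod :=
            (prod_normalizedFactors hg0).symm.dvd
        _ ∣ N := Multiset.prod_dvd_prod_of_le hle
    have hNann : aeval A N = 0 := by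
      apply eq_zero_of_forall_mulVec
      intro v
      exact mem_annI.mp ((annG_dvd_iff A).mp (hdvdN v))
    have hμN : μ ∣ N := by
      rw [← hreg] at *
      exact minpoly.dvd k A hNann
    have hce : q ::ₘ s.erase q = s := Multiset.cons_erase hq
    have hprodeq : q * N = s.prod := by rw [hN, ← Multiset.prod_cons, hce]
    have hassoc : Associated (q * N) μ := hprodeq ▸ prod_normalizedFactors hμ0
    have : q * N ∣ 1 * N := by
      rw [one_mul]
      exact hassoc.dvd.trans hμN
    have hq1 : q ∣ 1 := (mul_dvd_mul_iff_right hN0).mp this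
    exact hqprime.not_unit (isUnit_of_dvd_one hq1)
  obtain ⟨v, hdvd⟩ := step1
  obtain ⟨c, hc⟩ := hdvd
  have hc0 : c ≠ 0 := by
    intro h
    apply annG_ne_zero A v
    rw [hc, h, mul_zero]
  refine ⟨(aeval A c) *ᵥ v, ?_⟩
  ext p
  rw [mem_annI, Ideal.mem_span_singleton]
  rw [Matrix.mulVec_mulVec, ← _root_.map_mul]
  constructor
  · intro h
    have : annG A v ∣ p * c := (annG_dvd_iff A).mpr h
    rw [hc] at this
    exact (mul_dvd_mul_iff_right hc0).mp this
  · intro h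
    apply mem_annI.mp
    apply (annG_dvd_iff A).mp
    rw [hc]
    exact mul_dvd_mul_right h c


lemma key2_s7 {u w : Fin n → k} {a b : k[X]}
    (hu : annI A u = Ideal.span {a}) (hw : annI A w = Ideal.span {b})
    (hab : IsCoprime a b) : annI A (u + w) = Ideal.span {a * b} := by
  have hua : ∀ p : k[X], p ∈ annI A u ↔ a ∣ p := by
    intro p; rw [hu, Ideal.mem_span_singleton]
  have hwb : ∀ p : k[X], p ∈ annI A w ↔ b ∣ p := by
    intro p; rw [hw, Ideal.mem_span_singleton]
  have haU : (aeval A a) *ᵥ u = 0 := mem_annI.mp ((hua a).mpr dvd_rfl)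
  have hbW : (aeval A b) *ᵥ w = 0 := mem_annI.mp ((hwb b).mpr dvd_rfl)
  ext p
  rw [mem_annI, Ideal.mem_span_singleton, Matrix.mulVec_add]
  constructor
  · intro hp
    -- b * p annihilates u
    have h1 : (aeval A (b * p)) *ᵥ u = 0 := by
      have e1 : (aeval A (b * p)) *ᵥ (u + w) = 0 := by
        rw [Matrix.mulVec_add, _root_.map_mul, ← Matrix.mulVec_mulVec,
          ← Matrix.mulVec_mulVec]
        have : (aeval A p) *ᵥ u = -((aeval A p) *ᵥ w) := by
          rw [eq_neg_iff_add_eq_zero]; exact hp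
        rw [this, Matrix.mulVec_neg]
        have : (aeval A p) *ᵥ w = (aeval A p) *ᵥ w := rfl
        rw [show (aeval A b) *ᵥ ((aeval A p) *ᵥ w)
            = (aeval A p) *ᵥ ((aeval A b) *ᵥ w) by
          rw [Matrix.mulVec_mulVec, Matrix.mulVec_mulVec, ← _root_.map_mul,
            mul_comm b p, _root_.map_mul]]
        rw [hbW, Matrix.mulVec_zero, neg_zero, zero_add]
      rw [Matrix.mulVec_add] at e1
      rw [show (aeval A (b * p)) *ᵥ w = 0 by
        rw [mul_comm, _root_.map_mul, ← Matrix.mulVec_mulVec, hbW,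
          Matrix.mulVec_zero]] at e1
      rw [add_zero] at e1
      exact e1
    have h2 : (aeval A (a * p)) *ᵥ w = 0 := by
      have e1 : (aeval A (a * p)) *ᵥ (u + w) = 0 := by
        rw [_root_.map_mul, ← Matrix.mulVec_mulVec, Matrix.mulVec_add, hp,
          Matrix.mulVec_zero]
      rw [Matrix.mulVec_add] at e1
      rw [show (aeval A (a * p)) *ᵥ u = 0 by
        rw [mul_comm, _root_.map_mul, ← Matrix.mulVec_mulVec, haU,
          Matrix.mulVec_zero]] at e1
      rw [zero_add] at e1
      exact e1
    have hadvd : a ∣ p := by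
      have := (hua (b * p)).mp h1
      exact hab.dvd_of_dvd_mul_left this
    have hbdvd : b ∣ p := by
      have := (hwb (a * p)).mp h2
      exact hab.symm.dvd_of_dvd_mul_left this
    exact hab.mul_dvd hadvd hbdvd
  · rintro ⟨d, rfl⟩
    have e1 : (aeval A (a * b * d)) *ᵥ u = 0 := by
      rw [show a * b * d = b * d * a by ring, _root_.map_mul,
        ← Matrix.mulVec_mulVec, haU, Matrix.mulVec_zero]
    have e2 : (aeval A (a * b * d)) *ᵥ w = 0 := by
      rw [show a * b * d = a * d * b by ring, _root_.map_mul,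
        ← Matrix.mulVec_mulVec, hbW, Matrix.mulVec_zero]
    rw [e1, e2, add_zero]

lemma exists_ann_eq_span_charpoly (hreg : minpoly k A = A.charpoly) :
    ∃ v, annI A v = Ideal.span {A.charpoly} := by
  set μ := A.charpoly with hμ
  have hμ0 : μ ≠ 0 := charpoly_ne_zero A
  set s := normalizedFactors μ with hs
  -- by induction on subsets of s.toFinset
  have main : ∀ t : Finset k[X], t ⊆ s.toFinset →
      ∃ v, annI A v = Ideal.span {∏ q ∈ t, q ^ s.count q} := by
    intro t
    induction t using Finset.induction_on with
    | empty =>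
      intro _
      refine ⟨0, ?_⟩
      rw [Finset.prod_empty, Ideal.span_singleton_one, eq_top_iff]
      intro p _
      rw [mem_annI, Matrix.mulVec_zero]
    | @insert q t hq ih =>
      intro hsub
      have hqmem : q ∈ s.toFinset := hsub (Finset.mem_insert_self q t)
      have htsub : t ⊆ s.toFinset := fun x hx => hsub (Finset.mem_insert_of_mem hx)
      obtain ⟨u, hu⟩ := key1 A hreg q hqmem
      obtain ⟨w, hw⟩ := ih htsub
      have hqmem' := Multiset.mem_toFinset.mp hqmem
      have hqirr : Irreducible q := (prime_of_normalized_factor q hqmem').irreducible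
      have hcop : IsCoprime (q ^ s.count q) (∏ r ∈ t, r ^ s.count r) := by
        apply IsCoprime.pow_left
        apply IsCoprime.prod_right
        intro r hr
        have hrmem' := Multiset.mem_toFinset.mp (htsub hr)
        have hrirr : Irreducible r := (prime_of_normalized_factor r hrmem').irreducible
        apply IsCoprime.pow_right
        rw [hqirr.coprime_iff_not_dvd]
        intro hdvd
        have hassoc : Associated q r := hqirr.associated_of_dvd hrirr hdvd
        have : q = r := by
          rw [← normalize_normalized_factor q hqmem',
            ← normalize_normalized_factor r hrmem']
          exact normalize_eq_normalize hdvd hassoc.symm.dvd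
        exact hq (this ▸ hr)
      refine ⟨u + w, ?_⟩
      rw [key2_s7 A hu hw hcop, Finset.prod_insert hq]
  obtain ⟨v, hv⟩ := main s.toFinset le_rfl
  refine ⟨v, ?_⟩
  rw [hv, ← Finset.prod_multiset_count]
  rw [Ideal.span_singleton_eq_span_singleton]
  exact prod_normalizedFactors hμ0


lemma sum_mulVec' {ι : Type*} (s : Finset ι) (M : ι → Matrix (Fin n) (Fin n) k)
    (v : Fin n → k) : (∑ i ∈ s, M i) *ᵥ v = ∑ i ∈ s, M i *ᵥ v := by
  induction s using Finset.cons_induction with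
  | empty => simp [Matrix.zero_mulVec]
  | cons a s ha ih => rw [Finset.sum_cons, Finset.sum_cons, Matrix.add_mulVec, ih]

lemma aeval_sum_form (c : Fin n → k) :
    aeval A (∑ i : Fin n, C (c i) * X ^ (i : ℕ)) = ∑ i : Fin n, c i • A ^ (i : ℕ) := by
  rw [map_sum]
  apply Finset.sum_congr rfl
  intro i _
  rw [_root_.map_mul, aeval_C, aeval_X_pow, Algebra.smul_def]

lemma coeff_sum_form (c : Fin n → k) (i0 : Fin n) :
    (∑ i : Fin n, C (c i) * X ^ (i : ℕ)).coeff (i0 : ℕ) = c i0 := by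
  rw [Polynomial.finset_sum_coeff]
  rw [Finset.sum_eq_single i0]
  · simp
  · intro b _ hb
    rw [Polynomial.coeff_C_mul, Polynomial.coeff_X_pow]
    have : (i0 : ℕ) ≠ (b : ℕ) := fun h => hb (Fin.ext h.symm)
    simp [this]
  · simp

lemma natDegree_sum_form_lt (hn : 0 < n) (c : Fin n → k) :
    (∑ i : Fin n, C (c i) * X ^ (i : ℕ)).natDegree < n := by
  have : (∑ i : Fin n, C (c i) * X ^ (i : ℕ)).natDegree ≤ n - 1 := by
    apply Polynomial.natDegree_sum_le_of_forall_le
    intro i _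
    calc (C (c i) * X ^ (i : ℕ)).natDegree
        ≤ (C (c i)).natDegree + (X ^ (i : ℕ) : k[X]).natDegree :=
          Polynomial.natDegree_mul_le
      _ ≤ n - 1 := by
          rw [Polynomial.natDegree_C, Polynomial.natDegree_X_pow, zero_add]
          omega
  omega

lemma commute_eq_aeval (hn : 0 < n) (hreg : minpoly k A = A.charpoly)
    (B : Matrix (Fin n) (Fin n) k) (hB : B * A = A * B) :
    ∃ p : k[X], B = aeval A p := by
  obtain ⟨v, hv⟩ := exists_ann_eq_span_charpoly A hreg
  have hdeg : A.charpoly.natDegree = n := by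
    rw [Matrix.charpoly_natDegree_eq_dim, Fintype.card_fin]
  -- the vectors A^i v are linearly independent
  have li : LinearIndependent k (fun i : Fin n => (A ^ (i : ℕ)) *ᵥ v) := by
    rw [Fintype.linearIndependent_iff]
    intro c hc
    by_contra hcon
    push_neg at hcon
    obtain ⟨i0, hi0⟩ := hcon
    set p : k[X] := ∑ i : Fin n, C (c i) * X ^ (i : ℕ) with hp
    have heval : (aeval A p) *ᵥ v = 0 := by
      rw [hp, aeval_sum_form, sum_mulVec']
      rw [← hc]
      apply Finset.sum_congr rfl
      intro i _
      rw [Matrix.smul_mulVec]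
    have hmem : p ∈ annI A v := heval
    rw [hv, Ideal.mem_span_singleton] at hmem
    have hp0 : p ≠ 0 := by
      intro h
      apply hi0
      rw [← coeff_sum_form c i0, ← hp, h, Polynomial.coeff_zero]
    have h1 := Polynomial.natDegree_le_of_dvd hmem hp0
    have h2 := natDegree_sum_form_lt (k := k) hn c
    rw [← hp] at h2
    omega
  haveI : Nonempty (Fin n) := Fin.pos_iff_nonempty.mp hn
  have hcard : Fintype.card (Fin n) = Module.finrank k (Fin n → k) := by
    rw [Module.finrank_pi, Fintype.card_fin]
  let b : Module.Basis (Fin n) k (Fin n → k) := basisOfLinearIndependentOfCardEqFinrank li hcard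
  have hbi : ∀ i, b i = (A ^ (i : ℕ)) *ᵥ v := fun i => by
    rw [show b = basisOfLinearIndependentOfCardEqFinrank li hcard from rfl,
      coe_basisOfLinearIndependentOfCardEqFinrank]
  set c : Fin n → k := fun i => b.repr (B *ᵥ v) i with hcdef
  set p : k[X] := ∑ i : Fin n, C (c i) * X ^ (i : ℕ) with hp
  have hBv : (aeval A p) *ᵥ v = B *ᵥ v := by
    rw [hp, aeval_sum_form, sum_mulVec']
    have := b.sum_repr (B *ᵥ v)
    rw [← this]
    apply Finset.sum_congr rfl
    intro i _
    rw [Matrix.smul_mulVec, hbi]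
  refine ⟨p, ?_⟩
  have hBpow : ∀ i : Fin n, B * A ^ (i : ℕ) = A ^ (i : ℕ) * B := by
    intro i
    exact ((Commute.pow_right (hB : Commute B A) (i : ℕ))).eq
  have hppow : ∀ i : Fin n, aeval A p * A ^ (i : ℕ) = A ^ (i : ℕ) * aeval A p := by
    intro i
    have hX : A ^ (i : ℕ) = aeval A (X ^ (i : ℕ)) := (aeval_X_pow (R := k) (x := A) (n := (i : ℕ))).symm
    rw [hX, ← _root_.map_mul, ← _root_.map_mul, mul_comm]
  have key : ∀ i : Fin n, B *ᵥ (b i) = (aeval A p) *ᵥ (b i) := by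
    intro i
    rw [hbi, Matrix.mulVec_mulVec, Matrix.mulVec_mulVec, hBpow i, hppow i,
      ← Matrix.mulVec_mulVec, ← Matrix.mulVec_mulVec, hBv]
  have hlin : B.mulVecLin = (aeval A p).mulVecLin := by
    apply b.ext
    intro i
    simpa [Matrix.mulVecLin_apply] using key i
  have hall : ∀ x, (B - aeval A p) *ᵥ x = 0 := by
    intro x
    rw [Matrix.sub_mulVec]
    have := LinearMap.congr_fun hlin x
    simp only [Matrix.mulVecLin_apply] at this
    rw [this, sub_self]
  have := eq_zero_of_forall_mulVec hall
  rw [sub_eq_zero] at this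
  exact this

end Cyclic

lemma map_aeval_matrix {R S : Type*} [CommRing R] [CommRing S] (f : R →+* S) {n : ℕ}
    (M : Matrix (Fin n) (Fin n) R) (P : R[X]) :
    (aeval M P).map f = aeval (M.map f) (P.map f) := by
  have hcomp : (f.mapMatrix).comp (algebraMap R (Matrix (Fin n) (Fin n) R))
      = (algebraMap S (Matrix (Fin n) (Fin n) S)).comp f := by
    apply RingHom.ext
    intro a
    ext i j
    simp [Matrix.algebraMap_matrix_apply, apply_ite f]
  have h := Polynomial.hom_eval₂ P (algebraMap R (Matrix (Fin n) (Fin n) R))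
    (f.mapMatrix : Matrix (Fin n) (Fin n) R →+* Matrix (Fin n) (Fin n) S) M
  rw [Polynomial.aeval_def, Polynomial.aeval_def, Polynomial.eval₂_map, ← hcomp]
  rw [← RingHom.mapMatrix_apply, ← RingHom.mapMatrix_apply]
  exact h


open IsLocalRing in
theorem stmt7' {R : Type*} [CommRing R] [IsLocalRing R]
    (n : ℕ) (hn : 0 < n)
    (𝔸 : Matrix (Fin n) (Fin n) R)
    (A : Matrix (Fin n) (Fin n) (ResidueField R)) (hA : A = 𝔸.map (residue R))
    (hreg : minpoly (ResidueField R) A = A.charpoly) :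
    ∀ g : GL (Fin n) (ResidueField R),
      (g : Matrix (Fin n) (Fin n) (ResidueField R)) * A =
        A * (g : Matrix (Fin n) (Fin n) (ResidueField R)) →
      ∃ gg : GL (Fin n) R,
        (gg : Matrix (Fin n) (Fin n) R) * 𝔸 = 𝔸 * (gg : Matrix (Fin n) (Fin n) R) ∧
        (gg : Matrix (Fin n) (Fin n) R).map (residue R) =
          (g : Matrix (Fin n) (Fin n) (ResidueField R)) := by
  intro g hg
  classical
  obtain ⟨p, hpB⟩ := commute_eq_aeval A hn hreg
    (g : Matrix (Fin n) (Fin n) (ResidueField R)) hg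
  choose σ hσ using IsLocalRing.residue_surjective (R := R)
  set P : R[X] := ∑ i ∈ p.support, Polynomial.monomial i (σ (p.coeff i)) with hP
  have hPmap : P.map (residue R) = p := by
    rw [hP, Polynomial.map_sum]
    simp only [Polynomial.map_monomial, hσ]
    exact (p.as_sum_support).symm
  set gg := aeval 𝔸 P with hgg
  have hcomm : gg * 𝔸 = 𝔸 * gg := by
    have h1 : gg * 𝔸 = aeval 𝔸 (P * Polynomial.X) := by
      rw [_root_.map_mul, Polynomial.aeval_X]
    have h2 : 𝔸 * gg = aeval 𝔸 (Polynomial.X * P) := by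
      rw [_root_.map_mul, Polynomial.aeval_X]
    rw [h1, h2, mul_comm P]
  have hmap : gg.map (residue R) = (g : Matrix (Fin n) (Fin n) (ResidueField R)) := by
    rw [hgg, map_aeval_matrix, hPmap, ← hA, ← hpB]
  have hdetg : IsUnit ((g : Matrix (Fin n) (Fin n) (ResidueField R)).det) :=
    (Matrix.isUnit_iff_isUnit_det _).mp g.isUnit
  have hdet : IsUnit gg.det := by
    by_contra h
    have hmem : gg.det ∈ maximalIdeal R := h
    have hz : residue R gg.det = 0 := Ideal.Quotient.eq_zero_iff_mem.mpr hmem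
    have h1 : residue R gg.det = ((g : Matrix (Fin n) (Fin n) (ResidueField R))).det := by
      rw [← RingHom.mapMatrix_apply] at hmap
      rw [← hmap]
      exact RingHom.map_det _ _
    rw [h1] at hz
    exact hdetg.ne_zero hz
  have hunit : IsUnit gg := (Matrix.isUnit_iff_isUnit_det gg).mpr hdet
  exact ⟨hunit.unit, by rw [hunit.unit_spec]; exact hcomm,
    by rw [hunit.unit_spec]; exact hmap⟩


/-- Theorem: centralizers lift in the regular case.  Let `R` be a local
principal ideal ring of length two with residue field `k` and reduction map `r`, and let
`𝔸 ∈ Mₙ(R)` be such that `A = r(𝔸)` is regular (its minimal polynomial equals its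
characteristic polynomial).  Then every `g ∈ GLₙ(k)` commuting with `A` lifts to some
`gg ∈ GLₙ(R)` commuting with `𝔸`. -/
theorem stmt7 {R : Type*} [CommRing R] [IsLocalRing R]
    (hprinc : (maximalIdeal R).IsPrincipal) (hne : maximalIdeal R ≠ ⊥)
    (hsq : maximalIdeal R ^ 2 = ⊥) (n : ℕ) (hn : 0 < n)
    (𝔸 : Matrix (Fin n) (Fin n) R)
    (A : Matrix (Fin n) (Fin n) (ResidueField R)) (hA : A = 𝔸.map (residue R))
    (hreg : minpoly (ResidueField R) A = A.charpoly) :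
    ∀ g : GL (Fin n) (ResidueField R),
      (g : Matrix (Fin n) (Fin n) (ResidueField R)) * A =
        A * (g : Matrix (Fin n) (Fin n) (ResidueField R)) →
      ∃ gg : GL (Fin n) R,
        (gg : Matrix (Fin n) (Fin n) R) * 𝔸 = 𝔸 * (gg : Matrix (Fin n) (Fin n) R) ∧
        (gg : Matrix (Fin n) (Fin n) R).map (residue R) =
          (g : Matrix (Fin n) (Fin n) (ResidueField R)) := by
  exact stmt7' n hn 𝔸 A hA hreg
end

section
/- Let R be a local principal ideal ring of length two with maximal ideal 𝔪 generated by π, residue field k, and reduction map r. Then for any positive integer n and any X, X' ∈ M_n(R), the matrices πX and πX' are similar in M_n(R) if and only if r(X) and r(X') are similar in M_n(k). -/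
open Matrix IsLocalRing

/-- Let `R` be a local principal ideal ring of length two with maximal
ideal generated by `π`, residue field `k`, and reduction map `r`.  For `X, X' ∈ Mₙ(R)`,
the matrices `πX` and `πX'` are similar in `Mₙ(R)` if and only if `r(X)` and `r(X')` are
similar in `Mₙ(k)`. -/
theorem stmt9 {R : Type*} [CommRing R] [IsLocalRing R] (π : R)
    (hπ : maximalIdeal R = Ideal.span {π}) (hne : maximalIdeal R ≠ ⊥)
    (hsq : maximalIdeal R ^ 2 = ⊥) (n : ℕ) (hn : 0 < n)
    (X X' : Matrix (Fin n) (Fin n) R) :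
    (∃ g : GL (Fin n) R,
        (g : Matrix (Fin n) (Fin n) R) * (π • X) * (g⁻¹ : GL (Fin n) R) = π • X') ↔
      ∃ h : GL (Fin n) (ResidueField R),
        (h : Matrix (Fin n) (Fin n) (ResidueField R)) * X.map (residue R) *
            (h⁻¹ : GL (Fin n) (ResidueField R)) = X'.map (residue R) := by
  have hπmem : π ∈ maximalIdeal R := by
    rw [hπ]; exact Ideal.mem_span_singleton_self π
  have hπ2 : π * π = 0 := by
    have h2 : π * π ∈ maximalIdeal R ^ 2 := by
      rw [pow_two]; exact Ideal.mul_mem_mul hπmem hπmem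
    rw [hsq] at h2
    exact h2
  have key : ∀ a : R, π * a = 0 ↔ residue R a = 0 := by
    intro a
    constructor
    · intro h0
      by_contra hr
      have ha : IsUnit a := by
        rw [← IsLocalRing.notMem_maximalIdeal]
        intro hmem
        exact hr (Ideal.Quotient.eq_zero_iff_mem.mpr hmem)
      obtain ⟨u, rfl⟩ := ha
      have hπ0 : π = 0 := by
        have := congrArg (· * (↑u⁻¹ : R)) h0
        simpa [mul_assoc] using this
      apply hne
      rw [hπ, hπ0, Ideal.span_singleton_eq_bot]
    · intro h0
      have hmem : a ∈ maximalIdeal R := Ideal.Quotient.eq_zero_iff_mem.mp h0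
      rw [hπ, Ideal.mem_span_singleton] at hmem
      obtain ⟨c, rfl⟩ := hmem
      rw [← mul_assoc, hπ2, zero_mul]
  have matkey : ∀ M N : Matrix (Fin n) (Fin n) R,
      π • M = π • N ↔ M.map (residue R) = N.map (residue R) := by
    intro M N
    constructor
    · intro hMN
      ext i j
      have h1 : π * M i j = π * N i j := by
        have := congrFun (congrFun hMN i) j
        simpa [Matrix.smul_apply] using this
      have h0 : π * (M i j - N i j) = 0 := by
        rw [mul_sub, h1, sub_self]
      have := (key _).mp h0
      rw [map_sub, sub_eq_zero] at this
      simpa [Matrix.map_apply] using this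
    · intro hMN
      ext i j
      have h1 : residue R (M i j) = residue R (N i j) := by
        have := congrFun (congrFun hMN i) j
        simpa [Matrix.map_apply] using this
      have h0 : residue R (M i j - N i j) = 0 := by
        rw [map_sub, h1, sub_self]
      have := (key _).mpr h0
      rw [mul_sub, sub_eq_zero] at this
      simpa [Matrix.smul_apply] using this
  constructor
  · rintro ⟨g, hg⟩
    refine ⟨Units.map (RingHom.mapMatrix (residue R)).toMonoidHom g, ?_⟩
    have h1 : π • ((g : Matrix (Fin n) (Fin n) R) * X * (↑g⁻¹ : Matrix (Fin n) (Fin n) R))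
        = π • X' := by
      rw [← hg]
      rw [Matrix.mul_smul, Matrix.smul_mul]
    have h2 := (matkey _ _).mp h1
    have h3 : ((g : Matrix (Fin n) (Fin n) R) * X *
        (↑g⁻¹ : Matrix (Fin n) (Fin n) R)).map (residue R)
        = ((g : Matrix (Fin n) (Fin n) R)).map (residue R) * X.map (residue R) *
          ((↑g⁻¹ : Matrix (Fin n) (Fin n) R)).map (residue R) := by
      simp [Matrix.map_mul]
    rw [h3] at h2
    simpa [Units.coe_map, RingHom.mapMatrix_apply] using h2
  · rintro ⟨h, hh⟩
    have hsurj : Function.Surjective (residue R) := Ideal.Quotient.mk_surjective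
    choose G hG using fun i j => hsurj ((h : Matrix (Fin n) (Fin n) (ResidueField R)) i j)
    have hGmap : (Matrix.of G).map (residue R) = (h : Matrix (Fin n) (Fin n) (ResidueField R)) := by
      ext i j
      exact hG i j
    have hdet : IsUnit (Matrix.of G).det := by
      have hmapdet : residue R (Matrix.of G).det
          = ((h : Matrix (Fin n) (Fin n) (ResidueField R))).det := by
        rw [← hGmap]
        exact (RingHom.map_det (residue R) (Matrix.of G)).trans rfl
      have hu : IsUnit (residue R (Matrix.of G).det) := by
        rw [hmapdet]
        exact (Matrix.isUnit_iff_isUnit_det _).mp h.isUnit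
      rw [← IsLocalRing.notMem_maximalIdeal]
      intro hmem
      exact hu.ne_zero (Ideal.Quotient.eq_zero_iff_mem.mpr hmem)
    have hGU : IsUnit (Matrix.of G) := (Matrix.isUnit_iff_isUnit_det _).mpr hdet
    refine ⟨hGU.unit, ?_⟩
    have hmapg : Units.map (RingHom.mapMatrix (residue R)).toMonoidHom hGU.unit = h := by
      apply Units.ext
      simpa [Units.coe_map, RingHom.mapMatrix_apply, IsUnit.unit_spec] using hGmap
    have hcoe : ((hGU.unit : Matrix (Fin n) (Fin n) R)).map (residue R)
        = (h : Matrix (Fin n) (Fin n) (ResidueField R)) := by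
      simpa [Units.coe_map, RingHom.mapMatrix_apply] using congrArg Units.val hmapg
    have hcoeinv : ((↑hGU.unit⁻¹ : Matrix (Fin n) (Fin n) R)).map (residue R)
        = ((h⁻¹ : GL (Fin n) (ResidueField R)) : Matrix (Fin n) (Fin n) (ResidueField R)) := by
      have := congrArg Units.val (congrArg Inv.inv hmapg)
      simpa [Units.coe_map, RingHom.mapMatrix_apply] using this
    have h2 : ((hGU.unit : Matrix (Fin n) (Fin n) R) * X *
        (↑hGU.unit⁻¹ : Matrix (Fin n) (Fin n) R)).map (residue R) = X'.map (residue R) := by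
      rw [Matrix.map_mul, Matrix.map_mul, hcoe, hcoeinv]
      exact hh
    have h1 := (matkey _ _).mpr h2
    rw [Matrix.mul_smul, Matrix.smul_mul]
    exact h1
end

section
/- Let R be a finite local principal ideal ring of length two whose residue field has cardinality q. Then the number of similarity classes in M_2(R), i.e., the number of orbits for the conjugation action of GL_2(R) on M_2(R), equals q⁴ + q³ + q². -/
open Matrix IsLocalRing

set_option linter.unusedSectionVars false
set_option linter.unreachableTactic false
set_option linter.unusedTactic false
set_option maxHeartbeats 1000000
noncomputable section
namespace Stmt12

variable {R : Type*} [CommRing R] [IsLocalRing R]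

/-- a fixed section of the residue map -/
def sec (R : Type*) [CommRing R] [IsLocalRing R] : ResidueField R → R :=
  Function.surjInv (IsLocalRing.residue_surjective)

lemma residue_sec (c : ResidueField R) : residue R (sec R c) = c :=
  Function.surjInv_eq _ c

lemma mem_max_iff_residue {x : R} : x ∈ maximalIdeal R ↔ residue R x = 0 := by
  exact (Ideal.Quotient.eq_zero_iff_mem).symm

lemma unit_iff_residue {x : R} : IsUnit x ↔ residue R x ≠ 0 := by
  rw [show (residue R x ≠ 0) ↔ ¬ x ∈ maximalIdeal R from not_congr mem_max_iff_residue.symm]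
  constructor
  · intro h hx; exact (IsLocalRing.mem_maximalIdeal x).mp hx h
  · intro h; by_contra hu
    exact h ((IsLocalRing.mem_maximalIdeal x).mpr hu)

section pi
variable {π : R} (hgen : maximalIdeal R = Ideal.span {π})
  (hne : maximalIdeal R ≠ ⊥) (hsq : maximalIdeal R ^ 2 = ⊥)

include hgen hne in
lemma pi_ne_zero : π ≠ 0 := by
  rintro rfl
  exact hne (by rw [hgen, Ideal.span_singleton_eq_bot])

include hgen in
lemma pi_mem : π ∈ maximalIdeal R := by
  rw [hgen]; exact Ideal.mem_span_singleton_self π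

include hgen hsq in
lemma pi_mul_eq_zero {x : R} (hx : x ∈ maximalIdeal R) : π * x = 0 := by
  have : π * x ∈ maximalIdeal R ^ 2 := by
    rw [sq]; exact Ideal.mul_mem_mul (pi_mem hgen) hx
  rwa [hsq, Ideal.mem_bot] at this

include hgen hne hsq in
lemma pi_mul_eq_zero_iff {x : R} : π * x = 0 ↔ x ∈ maximalIdeal R := by
  refine ⟨fun h => ?_, pi_mul_eq_zero hgen hsq⟩
  by_contra hx
  have hu : IsUnit x := by
    by_contra hu; exact hx ((IsLocalRing.mem_maximalIdeal x).mpr hu)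
  obtain ⟨u, rfl⟩ := hu
  have : π = 0 := by
    have := congrArg (· * (↑u⁻¹ : R)) h
    simpa [mul_assoc] using this
  exact pi_ne_zero hgen hne this

include hgen in
lemma mem_iff_pi_dvd {x : R} : x ∈ maximalIdeal R ↔ ∃ b, x = π * b := by
  rw [hgen, Ideal.mem_span_singleton]
  exact ⟨fun ⟨b, h⟩ => ⟨b, h⟩, fun ⟨b, h⟩ => ⟨b, h⟩⟩

include hgen hsq in
lemma pi_mul_congr {x y : R} (h : residue R x = residue R y) : π * x = π * y := by
  have : x - y ∈ maximalIdeal R := by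
    rw [mem_max_iff_residue, map_sub, h, sub_self]
  have := pi_mul_eq_zero hgen hsq this
  rw [mul_sub, sub_eq_zero] at this; exact this
end pi



abbrev M2 (R : Type*) [CommRing R] := Matrix (Fin 2) (Fin 2) R

/-- similarity -/
def sim (A B : M2 R) : Prop := ∃ g : (M2 R)ˣ, (↑g : M2 R) * A * ↑g⁻¹ = B

lemma sim_refl (A : M2 R) : sim A A := ⟨1, by simp⟩

lemma sim_symm {A B : M2 R} (h : sim A B) : sim B A := by
  obtain ⟨g, rfl⟩ := h
  exact ⟨g⁻¹, by simp [mul_assoc, ← Units.val_mul]⟩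

lemma sim_trans {A B C : M2 R} (h : sim A B) (h' : sim B C) : sim A C := by
  obtain ⟨g, rfl⟩ := h; obtain ⟨g', rfl⟩ := h'
  exact ⟨g' * g, by simp [Units.val_mul, mul_assoc]⟩

lemma sim_equiv : Equivalence (sim (R := R)) := ⟨sim_refl, sim_symm, sim_trans⟩

/-- companion matrix of x^2 - t x + d -/
def cmp (t d : R) : M2 R := !![0, -d; 1, t]

lemma trace_cmp (t d : R) : (cmp t d).trace = t := by simp [cmp, Matrix.trace_fin_two]
lemma det_cmp (t d : R) : (cmp t d).det = d := by simp [cmp, Matrix.det_fin_two]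

def NS (A : M2 R) : Prop := IsUnit (A 1 0) ∨ IsUnit (A 0 1) ∨ IsUnit (A 1 1 - A 0 0)

lemma not_NS_iff {A : M2 R} : ¬ NS A ↔
    A 1 0 ∈ maximalIdeal R ∧ A 0 1 ∈ maximalIdeal R ∧ A 1 1 - A 0 0 ∈ maximalIdeal R := by
  simp only [NS, not_or, IsLocalRing.mem_maximalIdeal, mem_nonunits_iff]

/-- in a local ring a unit plus two nonunits is a unit -/
lemma isUnit_add_of_mem {u x : R} (hu : IsUnit u) (hx : x ∈ maximalIdeal R) :
    IsUnit (u + x) := by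
  by_contra h
  have : u + x ∈ maximalIdeal R := (IsLocalRing.mem_maximalIdeal _).mpr h
  have : u ∈ maximalIdeal R := by
    have := Ideal.sub_mem _ this hx; simpa using this
  exact (IsLocalRing.mem_maximalIdeal u).mp this hu

/-- Cayley–Hamilton for 2×2, entrywise. -/
lemma mul_self_eq (A : M2 R) :
    A * A = (A 0 0 + A 1 1) • A - (A 0 0 * A 1 1 - A 0 1 * A 1 0) • (1 : M2 R) := by
  ext i j
  fin_cases i <;> fin_cases j <;>
    simp [Matrix.mul_apply, Fin.sum_univ_two, Matrix.one_apply] <;> ring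

/-- key: an `NS` matrix is similar to its companion matrix -/
lemma sim_cmp {A : M2 R} (h : NS A) :
    sim A (cmp (A 0 0 + A 1 1) (A 0 0 * A 1 1 - A 0 1 * A 1 0)) := by
  set t := A 0 0 + A 1 1 with ht
  set d := A 0 0 * A 1 1 - A 0 1 * A 1 0 with hd
  have key : ∀ g : M2 R, IsUnit g.det → A * g = g * cmp t d → sim A (cmp t d) := by
    intro g hdet heq
    have hu : IsUnit g := (Matrix.isUnit_iff_isUnit_det g).mpr hdet
    obtain ⟨u, hu⟩ := hu
    refine ⟨u⁻¹, ?_⟩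
    have : (↑u⁻¹ : M2 R) * (A * ↑u) = ↑u⁻¹ * (↑u * cmp t d) := by rw [hu, heq]
    rw [← mul_assoc, ← mul_assoc, Units.inv_mul, one_mul] at this
    simpa [mul_assoc] using this
  have hCH := mul_self_eq A
  rcases h with h | h | h
  · refine key !![1, A 0 0; 0, A 1 0] (by simpa [Matrix.det_fin_two] using h) ?_
    ext i j
    fin_cases i <;> fin_cases j <;>
      simp [cmp, Matrix.mul_apply, Fin.sum_univ_two] <;> ring
  · refine key !![0, A 0 1; 1, A 1 1] (by simpa [Matrix.det_fin_two] using h.neg) ?_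
    ext i j
    fin_cases i <;> fin_cases j <;>
      simp [cmp, Matrix.mul_apply, Fin.sum_univ_two] <;> ring
  · by_cases h10 : IsUnit (A 1 0)
    · refine key !![1, A 0 0; 0, A 1 0] (by simpa [Matrix.det_fin_two] using h10) ?_
      ext i j
      fin_cases i <;> fin_cases j <;>
        simp [cmp, Matrix.mul_apply, Fin.sum_univ_two] <;> ring
    by_cases h01 : IsUnit (A 0 1)
    · refine key !![0, A 0 1; 1, A 1 1] (by simpa [Matrix.det_fin_two] using h01.neg) ?_
      ext i j
      fin_cases i <;> fin_cases j <;>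
        simp [cmp, Matrix.mul_apply, Fin.sum_univ_two] <;> ring
    · -- v = (1,1)
      refine key !![1, A 0 0 + A 0 1; 1, A 1 0 + A 1 1] ?_ ?_
      · have : (!![1, A 0 0 + A 0 1; 1, A 1 0 + A 1 1] : M2 R).det
            = (A 1 1 - A 0 0) + (A 1 0 + -(A 0 1)) := by
          simp [Matrix.det_fin_two]; ring
        rw [this]
        refine isUnit_add_of_mem h ?_
        exact add_mem ((IsLocalRing.mem_maximalIdeal _).mpr h10)
          (neg_mem ((IsLocalRing.mem_maximalIdeal _).mpr h01))
      · ext i j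
        fin_cases i <;> fin_cases j <;>
          simp [cmp, Matrix.mul_apply, Fin.sum_univ_two] <;> ring
  

section more
variable {R : Type*} [CommRing R] [IsLocalRing R]

/-- residue matrix -/
def resM (A : M2 R) : M2 (ResidueField R) := A.map (residue R)

lemma resM_apply (A : M2 R) (i j : Fin 2) : resM A i j = residue R (A i j) := rfl

lemma resM_mul (A B : M2 R) : resM (A * B) = resM A * resM B := by
  simp [resM, Matrix.map_mul]

lemma resM_one : resM (1 : M2 R) = 1 := by simp [resM]

lemma NS_iff_resM {A : M2 R} : NS A ↔
    resM A 1 0 ≠ 0 ∨ resM A 0 1 ≠ 0 ∨ resM A 1 1 - resM A 0 0 ≠ 0 := by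
  simp only [NS, unit_iff_residue, resM_apply, ← map_sub]

lemma resM_eq_of_smul_eq {π : R} (hgen : maximalIdeal R = Ideal.span {π})
    (hne : maximalIdeal R ≠ ⊥) (hsq : maximalIdeal R ^ 2 = ⊥)
    {X Y : M2 R} (h : π • X = π • Y) : resM X = resM Y := by
  ext i j
  have h2 : π * (X i j - Y i j) = 0 := by
    have := congrFun (congrFun h i) j
    simp only [Matrix.smul_apply, smul_eq_mul] at this
    rw [mul_sub, this, sub_self]
  have := (pi_mul_eq_zero_iff hgen hne hsq).mp h2
  rw [mem_max_iff_residue, map_sub, sub_eq_zero] at this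
  simpa [resM_apply] using this

lemma smul_eq_of_resM_eq {π : R} (hgen : maximalIdeal R = Ideal.span {π})
    (hsq : maximalIdeal R ^ 2 = ⊥)
    {X Y : M2 R} (h : resM X = resM Y) : π • X = π • Y := by
  ext i j
  simp only [Matrix.smul_apply, smul_eq_mul]
  apply pi_mul_congr hgen hsq
  have := congrFun (congrFun h i) j
  simpa [resM_apply] using this

lemma NS_of_resM_eq {X Y : M2 R} (h : resM X = resM Y) : NS X ↔ NS Y := by
  rw [NS_iff_resM, NS_iff_resM, h]

lemma NS_sub_scalar (X : M2 R) (c : R) : NS (X - c • 1) ↔ NS X := by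
  simp only [NS, Matrix.sub_apply, Matrix.smul_apply, Matrix.one_apply]
  norm_num

/-- conjugation-invariance of non-scalarity mod m -/
lemma NS_conj_aux (A : M2 R) (g : (M2 R)ˣ)
    (h : NS (R := R) ((↑g : M2 R) * A * ↑g⁻¹)) : NS A := by
  by_contra hA
  have hscal : resM A = residue R (A 0 0) • 1 := by
    rw [not_NS_iff] at hA
    obtain ⟨h1, h2, h3⟩ := hA
    rw [mem_max_iff_residue] at h1 h2
    rw [mem_max_iff_residue, map_sub, sub_eq_zero] at h3
    ext i j
    fin_cases i <;> fin_cases j <;>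
      simp_all [resM_apply, Matrix.one_apply]
  have hres : resM (R := R) ((↑g : M2 R) * A * ↑g⁻¹) = residue R (A 0 0) • 1 := by
    rw [resM_mul, resM_mul, hscal]
    rw [Matrix.mul_smul, Matrix.smul_mul, Matrix.mul_one, ← resM_mul]
    rw [← Units.val_mul, mul_inv_cancel, Units.val_one, resM_one]
  rw [NS_iff_resM] at h
  rw [hres] at h
  simp [Matrix.smul_apply, Matrix.one_apply] at h

lemma NS_conj (A : M2 R) (g : (M2 R)ˣ) :
    NS (R := R) ((↑g : M2 R) * A * ↑g⁻¹) ↔ NS A := by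
  refine ⟨NS_conj_aux A g, fun h => ?_⟩
  refine NS_conj_aux _ g⁻¹ ?_
  rw [inv_inv]
  have heq : (↑g⁻¹ : M2 R) * ((↑g : M2 R) * A * ↑g⁻¹) * (↑g : M2 R) = A := by
    simp [mul_assoc, ← Units.val_mul]
  rwa [heq]

lemma trace_conj (A : M2 R) (g : (M2 R)ˣ) : ((↑g : M2 R) * A * ↑g⁻¹).trace = A.trace := by
  rw [Matrix.trace_mul_comm]
  rw [← mul_assoc, ← Units.val_mul, inv_mul_cancel, Units.val_one, one_mul]

lemma det_conj (A : M2 R) (g : (M2 R)ˣ) : ((↑g : M2 R) * A * ↑g⁻¹).det = A.det := by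
  rw [Matrix.det_mul, Matrix.det_mul, mul_comm, ← mul_assoc, ← Matrix.det_mul,
    ← Units.val_mul, inv_mul_cancel, Units.val_one, Matrix.det_one, one_mul]

lemma conj_smul_one_add (a π : R) (B : M2 R) (g : (M2 R)ˣ) :
    (↑g : M2 R) * (a • 1 + π • B) * ↑g⁻¹ = a • 1 + π • ((↑g : M2 R) * B * ↑g⁻¹) := by
  rw [mul_add, add_mul]
  congr 1
  · rw [Matrix.mul_smul, Matrix.smul_mul, Matrix.mul_one, ← Units.val_mul, mul_inv_cancel,
      Units.val_one]
  · rw [Matrix.mul_smul, Matrix.smul_mul]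

lemma det_sub_scalar (X : M2 R) (c : R) :
    (X - c • 1).det = X.det - X.trace * c + c * c := by
  simp [Matrix.det_fin_two, Matrix.trace_fin_two, Matrix.sub_apply, Matrix.smul_apply,
    Matrix.one_apply]
  ring

lemma trace_sub_scalar (X : M2 R) (c : R) :
    (X - c • 1).trace = X.trace - 2 * c := by
  simp [Matrix.trace_fin_two, Matrix.sub_apply, Matrix.smul_apply, Matrix.one_apply]
  ring

end more

section phi
variable {R : Type*} [CommRing R] [IsLocalRing R]

/-- divide by π (choice) -/
def pdiv (π x : R) : R := open Classical in if h : ∃ b, x = π * b then h.choose else 0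

lemma pdiv_spec {π x : R} (h : ∃ b, x = π * b) : π * pdiv π x = x := by
  rw [pdiv, dif_pos h]
  exact (h.choose_spec).symm

/-- the matrix `B` with `π • B = A - A 0 0 • 1` -/
def Bmat (π : R) (A : M2 R) : M2 R := fun i j => pdiv π ((A - A 0 0 • 1) i j)

lemma Bmat_spec {π : R} (hgen : maximalIdeal R = Ideal.span {π}) {A : M2 R}
    (hA : ¬ NS A) : π • Bmat π A = A - A 0 0 • 1 := by
  rw [not_NS_iff] at hA
  obtain ⟨h1, h2, h3⟩ := hA
  rw [mem_iff_pi_dvd hgen] at h1 h2 h3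
  ext i j
  simp only [Matrix.smul_apply, smul_eq_mul, Bmat]
  apply pdiv_spec
  fin_cases i <;> fin_cases j <;>
    simp only [Matrix.sub_apply, Matrix.smul_apply, Matrix.one_apply, smul_eq_mul]
  · exact ⟨0, by norm_num⟩
  · simpa using h2
  · simpa using h1
  · simpa using h3

/-- if moreover `Bmat` is not NS, then `A` is scalar -/
lemma scalar_of_double {π : R} (hgen : maximalIdeal R = Ideal.span {π})
    (hsq : maximalIdeal R ^ 2 = ⊥) {A : M2 R}
    (hA : ¬ NS A) (hB : ¬ NS (Bmat π A)) : A = A 0 0 • 1 := by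
  have hs := Bmat_spec hgen hA
  set B := Bmat π A with hBdef
  rw [not_NS_iff] at hB
  obtain ⟨h1, h2, h3⟩ := hB
  have e1 : π * B 1 0 = 0 := pi_mul_eq_zero hgen hsq h1
  have e2 : π * B 0 1 = 0 := pi_mul_eq_zero hgen hsq h2
  have e3 : π * (B 1 1 - B 0 0) = 0 := pi_mul_eq_zero hgen hsq h3
  have hB00 : (A - A 0 0 • 1) 0 0 = 0 := by
    simp [Matrix.sub_apply, Matrix.smul_apply, Matrix.one_apply]
  have e0 : π * B 0 0 = 0 := by
    have := congrFun (congrFun hs 0) 0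
    simp only [Matrix.smul_apply, smul_eq_mul] at this
    rw [this, hB00]
  have : A - A 0 0 • 1 = 0 := by
    rw [← hs]
    ext i j
    simp only [Matrix.smul_apply, smul_eq_mul, Matrix.zero_apply]
    fin_cases i <;> fin_cases j
    · simpa using e0
    · simpa using e2
    · simpa using e1
    · rw [mul_sub, sub_eq_zero] at e3; simpa using e3.trans e0
  exact sub_eq_zero.mp this

/-- the shift action -/
def act (π : R) (c : ResidueField R) (x : R × ResidueField R × ResidueField R) :
    R × ResidueField R × ResidueField R :=
  (x.1 + π * sec R c, x.2.1 - 2 * c, x.2.2 - x.2.1 * c + c * c)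

def srel (π : R) (x y : R × ResidueField R × ResidueField R) : Prop :=
  ∃ c : ResidueField R, y = act π c x

section srel_props
variable {π : R} (hgen : maximalIdeal R = Ideal.span {π})
  (hne : maximalIdeal R ≠ ⊥) (hsq : maximalIdeal R ^ 2 = ⊥)

include hgen hsq in
lemma theta_add (c c' : ResidueField R) :
    π * sec R (c + c') = π * sec R c + π * sec R c' := by
  rw [← mul_add]
  apply pi_mul_congr hgen hsq
  simp [residue_sec, map_add]

include hgen hsq in
lemma theta_zero : π * sec R (0 : ResidueField R) = 0 := by
  rw [show (0 : R) = π * 0 by ring]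
  apply pi_mul_congr hgen hsq
  simp [residue_sec]

include hgen hne hsq in
lemma theta_inj {c c' : ResidueField R} (h : π * sec R c = π * sec R c') : c = c' := by
  have : π * (sec R c - sec R c') = 0 := by rw [mul_sub, h, sub_self]
  have := (pi_mul_eq_zero_iff hgen hne hsq).mp this
  rw [mem_max_iff_residue, map_sub, sub_eq_zero, residue_sec, residue_sec] at this
  exact this

include hgen hsq in
lemma srel_equiv : Equivalence (srel π) := by
  constructor
  · intro x
    exact ⟨0, by simp [act, theta_zero hgen hsq]⟩
  · rintro ⟨x1, x2, x3⟩ y ⟨c, rfl⟩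
    refine ⟨-c, ?_⟩
    have hth : π * sec R (-c) = -(π * sec R c) := by
      have h0 := theta_add hgen hsq c (-c)
      rw [add_neg_cancel, theta_zero hgen hsq] at h0
      exact (neg_eq_of_add_eq_zero_right h0.symm).symm
    simp only [act, Prod.mk.injEq, hth]
    refine ⟨by ring, by ring, by ring⟩
  · rintro ⟨x1, x2, x3⟩ y z ⟨c, rfl⟩ ⟨c', rfl⟩
    refine ⟨c + c', ?_⟩
    simp only [act, Prod.mk.injEq, theta_add hgen hsq]
    refine ⟨by ring, by ring, by ring⟩

end srel_props

/-- the classifying map -/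
def phi (π : R) (A : M2 R) : (R × R) ⊕ R ⊕ Quot (srel π) := open Classical in
  if NS A then Sum.inl (A.trace, A.det)
  else if NS (Bmat π A) then
    Sum.inr (Sum.inr (Quot.mk _ (A 0 0, residue R (Bmat π A).trace, residue R (Bmat π A).det)))
  else Sum.inr (Sum.inl (A 0 0))

end phi

section main
variable {R : Type*} [CommRing R] [IsLocalRing R]
variable {π : R}

/-- conjugation -/
def cj (g : (M2 R)ˣ) (X : M2 R) : M2 R := (↑g : M2 R) * X * ↑g⁻¹

lemma sim_iff_cj {A B : M2 R} : sim A B ↔ ∃ g : (M2 R)ˣ, cj g A = B := Iff.rfl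

lemma NS_cj (A : M2 R) (g : (M2 R)ˣ) : NS (cj g A) ↔ NS A := NS_conj A g

lemma trace_cj (A : M2 R) (g : (M2 R)ˣ) : (cj g A).trace = A.trace := trace_conj A g

lemma det_cj (A : M2 R) (g : (M2 R)ˣ) : (cj g A).det = A.det := det_conj A g

lemma cj_smul_one_add (a : R) (B : M2 R) (g : (M2 R)ˣ) :
    cj g (a • 1 + π • B) = a • 1 + π • cj g B := conj_smul_one_add a π B g

lemma cj_smul_one (a : R) (g : (M2 R)ˣ) : cj g (a • (1 : M2 R)) = a • 1 := by
  rw [cj, Matrix.mul_smul, Matrix.smul_mul, Matrix.mul_one, ← Units.val_mul,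
    mul_inv_cancel, Units.val_one]

lemma res_trace_eq {X Y : M2 R} (h : resM X = resM Y) :
    residue R X.trace = residue R Y.trace := by
  have h0 := congrFun (congrFun h 0) 0
  have h1 := congrFun (congrFun h 1) 1
  simp only [resM_apply] at h0 h1
  simp [Matrix.trace_fin_two, map_add, h0, h1]

lemma res_det_eq {X Y : M2 R} (h : resM X = resM Y) :
    residue R X.det = residue R Y.det := by
  have e : ∀ i j, residue R (X i j) = residue R (Y i j) := by
    intro i j; exact congrFun (congrFun h i) j
  simp [Matrix.det_fin_two, map_sub, _root_.map_mul, e]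

lemma sim_cmp' {M : M2 R} (h : NS M) : sim M (cmp M.trace M.det) := by
  have := sim_cmp h
  simpa [Matrix.trace_fin_two, Matrix.det_fin_two] using this

lemma sim_add_scalar_smul {B C : M2 R} (a : R) (h : sim B C) :
    sim (a • 1 + π • B) (a • 1 + π • C) := by
  rw [sim_iff_cj] at h
  obtain ⟨g, rfl⟩ := h
  exact ⟨g, cj_smul_one_add a B g⟩

variable (hgen : maximalIdeal R = Ideal.span {π})
  (hne : maximalIdeal R ≠ ⊥) (hsq : maximalIdeal R ^ 2 = ⊥)

include hgen in
lemma A_eq_decomp {A : M2 R} (hA : ¬ NS A) : A = A 0 0 • 1 + π • Bmat π A := by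
  rw [Bmat_spec hgen hA]; abel

include hgen hne hsq in
lemma key_conj {A : M2 R} (hA : ¬ NS A) (g : (M2 R)ˣ) :
    ¬ NS (cj g A) ∧
    resM (Bmat π (cj g A)) = resM (cj g (Bmat π A) - (cj g (Bmat π A)) 0 0 • 1) ∧
    (cj g A) 0 0 = A 0 0 + π * (cj g (Bmat π A)) 0 0 := by
  have hA' : ¬ NS (cj g A) := fun hc => hA ((NS_cj A g).mp hc)
  set B := Bmat π A with hBdef
  set D : M2 R := cj g B with hDdef
  have hconj : cj g A = A 0 0 • 1 + π • D := by
    conv_lhs => rw [A_eq_decomp hgen hA]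
    exact cj_smul_one_add _ _ g
  have ha' : (cj g A) 0 0 = A 0 0 + π * D 0 0 := by
    rw [hconj]
    simp [Matrix.add_apply, Matrix.smul_apply, Matrix.one_apply]
  refine ⟨hA', ?_, ha'⟩
  apply resM_eq_of_smul_eq hgen hne hsq
  rw [Bmat_spec hgen hA', hconj]
  have h00 : (A 0 0 • 1 + π • D) 0 0 = A 0 0 + π * D 0 0 := by
    simp [Matrix.add_apply, Matrix.smul_apply, Matrix.one_apply]
  rw [h00, smul_sub, smul_smul]
  ext i j
  simp only [Matrix.add_apply, Matrix.sub_apply, Matrix.smul_apply, Matrix.one_apply,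
    smul_eq_mul]
  split <;> ring

include hgen hne hsq in
lemma phi_sim {A A' : M2 R} (h : sim A A') : phi π A = phi π A' := by
  classical
  rw [sim_iff_cj] at h
  obtain ⟨g, rfl⟩ := h
  by_cases hA : NS A
  · have hA' : NS (cj g A) := (NS_cj A g).mpr hA
    rw [phi, phi, if_pos hA, if_pos hA', trace_cj, det_cj]
  · obtain ⟨hA', hres, ha'⟩ := key_conj hgen hne hsq hA g
    set B := Bmat π A with hBdef
    set D : M2 R := cj g B with hDdef
    have hNSiff : NS (Bmat π (cj g A)) ↔ NS B := by
      rw [NS_of_resM_eq hres, NS_sub_scalar, hDdef, NS_cj]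
    by_cases hB : NS B
    · have hB' : NS (Bmat π (cj g A)) := hNSiff.mpr hB
      rw [phi, phi, if_neg hA, if_neg hA', if_pos hB, if_pos hB']
      refine congrArg _ (congrArg _ (Quot.sound ⟨residue R (D 0 0), ?_⟩))
      have htr : residue R (Bmat π (cj g A)).trace
          = residue R B.trace - 2 * residue R (D 0 0) := by
        rw [res_trace_eq hres, trace_sub_scalar, hDdef, trace_cj]
        simp only [map_sub, _root_.map_mul, map_ofNat]
      have hdet : residue R (Bmat π (cj g A)).det
          = residue R B.det - residue R B.trace * residue R (D 0 0)
            + residue R (D 0 0) * residue R (D 0 0) := by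
        rw [res_det_eq hres, det_sub_scalar, hDdef, det_cj, trace_cj]
        simp only [map_sub, map_add, _root_.map_mul]
      have hsecpi : π * sec R (residue R (D 0 0)) = π * D 0 0 :=
        pi_mul_congr hgen hsq (by rw [residue_sec])
      simp only [act, Prod.mk.injEq]
      exact ⟨by rw [ha', hsecpi], htr, hdet⟩
    · have hB' : ¬ NS (Bmat π (cj g A)) := fun hc => hB (hNSiff.mp hc)
      rw [phi, phi, if_neg hA, if_neg hA', if_neg hB, if_neg hB']
      have hscal : A = A 0 0 • 1 := scalar_of_double hgen hsq hA hB
      have hfix : cj g A = A := by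
        conv_lhs => rw [hscal]
        rw [cj_smul_one, ← hscal]
      rw [hfix]

end main

section inj
variable {R : Type*} [CommRing R] [IsLocalRing R] {π : R}
variable (hgen : maximalIdeal R = Ideal.span {π})
  (hne : maximalIdeal R ≠ ⊥) (hsq : maximalIdeal R ^ 2 = ⊥)

include hgen hne hsq in
lemma phi_inj {A A' : M2 R} (h : phi π A = phi π A') : sim A A' := by
  classical
  by_cases hA : NS A <;> by_cases hA' : NS A'
  · rw [phi, phi, if_pos hA, if_pos hA'] at h
    simp only [Sum.inl.injEq, Prod.mk.injEq] at h
    obtain ⟨ht, hd⟩ := h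
    refine sim_trans (sim_cmp' hA) ?_
    rw [ht, hd]
    exact sim_symm (sim_cmp' hA')
  · rw [phi, phi, if_pos hA, if_neg hA'] at h
    split_ifs at h <;> simp at h
  · rw [phi, phi, if_neg hA, if_pos hA'] at h
    split_ifs at h <;> simp at h
  · rw [phi, phi, if_neg hA, if_neg hA'] at h
    by_cases hB : NS (Bmat π A) <;> by_cases hB' : NS (Bmat π A')
    · rw [if_pos hB, if_pos hB'] at h
      simp only [Sum.inr.injEq] at h
      have hrel := ((srel_equiv hgen hsq).eqvGen_iff).mp (Quot.eqvGen_exact h)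
      obtain ⟨c, hc⟩ := hrel
      rw [act, Prod.mk.injEq, Prod.mk.injEq] at hc
      obtain ⟨hc1, hc2, hc3⟩ := hc
      set B := Bmat π A with hBdef
      set B' := Bmat π A' with hB'def
      set t := B.trace
      set d := B.det
      set t' := B'.trace
      set d' := B'.det
      -- step 1
      have step1 : sim A (A 0 0 • 1 + π • cmp t d) := by
        have h1 := sim_add_scalar_smul (π := π) (A 0 0) (sim_cmp' hB)
        rwa [← A_eq_decomp hgen hA] at h1
      have step1' : sim A' (A' 0 0 • 1 + π • cmp t' d') := by
        have h1 := sim_add_scalar_smul (π := π) (A' 0 0) (sim_cmp' hB')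
        rwa [← A_eq_decomp hgen hA'] at h1
      set E : M2 R := (sec R c) • 1 + cmp t' d' with hEdef
      have hE : NS E := by
        refine Or.inl ?_
        have : E 1 0 = 1 := by
          simp [hEdef, cmp, Matrix.add_apply, Matrix.smul_apply, Matrix.one_apply]
        rw [this]; exact isUnit_one
      have step2 : A' 0 0 • 1 + π • cmp t' d' = A 0 0 • 1 + π • E := by
        rw [hc1, hEdef]
        ext i j
        simp only [Matrix.add_apply, Matrix.smul_apply, Matrix.one_apply, smul_eq_mul]
        split <;> ring
      have hEt : residue R E.trace = residue R t := by
        have : E.trace = t' + 2 * sec R c := by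
          simp [hEdef, cmp, Matrix.trace_fin_two, Matrix.add_apply, Matrix.smul_apply,
            Matrix.one_apply]
          ring
        rw [this]
        simp only [map_add, _root_.map_mul, map_ofNat, residue_sec]
        rw [hc2]
        ring
      have hEd : residue R E.det = residue R d := by
        have : E.det = d' + t' * sec R c + sec R c * sec R c := by
          simp [hEdef, cmp, Matrix.det_fin_two, Matrix.add_apply, Matrix.smul_apply,
            Matrix.one_apply]
          ring
        rw [this]
        simp only [map_add, _root_.map_mul, residue_sec]
        rw [hc2, hc3]
        ring
      have step4 : π • cmp E.trace E.det = π • cmp t d := by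
        apply smul_eq_of_resM_eq hgen hsq
        ext i j
        fin_cases i <;> fin_cases j <;>
          simp [cmp, resM_apply, map_neg, hEt, hEd]
      have step3 : sim (A 0 0 • 1 + π • E) (A 0 0 • 1 + π • cmp E.trace E.det) :=
        sim_add_scalar_smul _ (sim_cmp' hE)
      rw [step4] at step3
      exact sim_trans (sim_trans step1 (sim_symm step3))
        (by rw [← step2]; exact sim_symm step1')
    · rw [if_pos hB, if_neg hB'] at h; simp at h
    · rw [if_neg hB, if_pos hB'] at h; simp at h
    · rw [if_neg hB, if_neg hB'] at h
      simp only [Sum.inr.injEq, Sum.inl.injEq] at h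
      rw [scalar_of_double hgen hsq hA hB, scalar_of_double hgen hsq hA' hB', h]
      exact sim_refl _

include hgen hne hsq in
lemma phi_surj : Function.Surjective (phi π (R := R)) := by
  classical
  rintro (⟨t, d⟩ | a | q)
  · refine ⟨cmp t d, ?_⟩
    have hNS : NS (cmp t d) := by
      refine Or.inl ?_
      have : cmp t d 1 0 = 1 := by simp [cmp]
      rw [this]; exact isUnit_one
    rw [phi, if_pos hNS, trace_cmp, det_cmp]
  · refine ⟨a • 1, ?_⟩
    have h00 : (a • (1 : M2 R)) 0 0 = a := by
      simp [Matrix.smul_apply, Matrix.one_apply]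
    have hA : ¬ NS (a • (1 : M2 R)) := by
      rw [not_NS_iff]
      refine ⟨?_, ?_, ?_⟩ <;>
        simp [Matrix.smul_apply, Matrix.one_apply, Ideal.zero_mem]
    have hBz : π • Bmat π (a • (1 : M2 R)) = 0 := by
      rw [Bmat_spec hgen hA, h00]
      abel
    have hB : ¬ NS (Bmat π (a • (1 : M2 R))) := by
      rw [not_NS_iff]
      have hm : ∀ i j, Bmat π (a • (1 : M2 R)) i j ∈ maximalIdeal R := by
        intro i j
        have := congrFun (congrFun hBz i) j
        simp only [Matrix.smul_apply, smul_eq_mul, Matrix.zero_apply] at this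
        exact (pi_mul_eq_zero_iff hgen hne hsq).mp this
      exact ⟨hm 1 0, hm 0 1, Ideal.sub_mem _ (hm 1 1) (hm 0 0)⟩
    rw [phi, if_neg hA, if_neg hB, h00]
  · obtain ⟨⟨a, t, d⟩, rfl⟩ := Quot.exists_rep q
    set C : M2 R := cmp (sec R t) (sec R d) with hCdef
    set A : M2 R := a • 1 + π • C with hAdef
    refine ⟨A, ?_⟩
    have h00 : A 0 0 = a := by
      simp [hAdef, hCdef, cmp, Matrix.add_apply, Matrix.smul_apply, Matrix.one_apply]
    have hpimem : ∀ x : R, π * x ∈ maximalIdeal R := fun x =>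
      Ideal.mul_mem_right x _ (pi_mem hgen)
    have hpiu : ¬ IsUnit π := (IsLocalRing.mem_maximalIdeal π).mp (pi_mem hgen)
    have hA : ¬ NS A := by
      rw [not_NS_iff]
      refine ⟨?_, ?_, ?_⟩ <;>
        · simp only [hAdef, hCdef, cmp, Matrix.add_apply, Matrix.smul_apply,
            Matrix.one_apply, Matrix.sub_apply, Matrix.cons_val', Matrix.cons_val_zero,
            Matrix.cons_val_one, Matrix.head_cons, Matrix.head_fin_const]
          norm_num [hpimem, hpiu]
    have hBC : π • Bmat π A = π • C := by
      rw [Bmat_spec hgen hA, h00, hAdef]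
      abel
    have hres : resM (Bmat π A) = resM C := resM_eq_of_smul_eq hgen hne hsq hBC
    have hB : NS (Bmat π A) := by
      rw [NS_of_resM_eq hres]
      refine Or.inl ?_
      have : C 1 0 = 1 := by simp [hCdef, cmp]
      rw [this]; exact isUnit_one
    rw [phi, if_neg hA, if_pos hB]
    refine congrArg _ (congrArg _ (congrArg _ ?_))
    have ht : residue R (Bmat π A).trace = t := by
      rw [res_trace_eq hres, hCdef, trace_cmp, residue_sec]
    have hd : residue R (Bmat π A).det = d := by
      rw [res_det_eq hres, hCdef, det_cmp, residue_sec]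
    rw [h00, ht, hd]

end inj

section count
variable {R : Type*} [CommRing R] [IsLocalRing R] {π : R}
variable (hgen : maximalIdeal R = Ideal.span {π})
  (hne : maximalIdeal R ≠ ⊥) (hsq : maximalIdeal R ^ 2 = ⊥)

include hgen hne hsq in
lemma quot_equiv :
    Nonempty (Quot (sim (R := R)) ≃ (R × R) ⊕ R ⊕ Quot (srel π)) := by
  refine ⟨Equiv.ofBijective (Quot.lift (phi π) (fun A B h => phi_sim hgen hne hsq h)) ⟨?_, ?_⟩⟩
  · intro x y
    induction x using Quot.ind with | _ A =>
    induction y using Quot.ind with | _ B =>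
    intro h
    exact Quot.sound (phi_inj hgen hne hsq h)
  · intro t
    obtain ⟨A, hA⟩ := phi_surj hgen hne hsq t
    exact ⟨Quot.mk _ A, hA⟩

include hgen hne hsq in
lemma R_equiv :
    Nonempty ((ResidueField R × ResidueField R) ≃ R) := by
  refine ⟨Equiv.ofBijective (fun p => sec R p.1 + π * sec R p.2) ⟨?_, ?_⟩⟩
  · rintro ⟨u, v⟩ ⟨u', v'⟩ h
    simp only at h
    have hres : u = u' := by
      have := congrArg (residue R) h
      have hm : ∀ w : R, residue R (π * w) = 0 := by
        intro w
        rw [← mem_max_iff_residue]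
        exact Ideal.mul_mem_right w _ (pi_mem hgen)
      simpa [map_add, hm, residue_sec] using this
    subst hres
    have h2 : π * sec R v = π * sec R v' := add_left_cancel h
    have := theta_inj hgen hne hsq h2
    rw [this]
  · intro x
    refine ⟨⟨residue R x, residue R (pdiv π (x - sec R (residue R x)))⟩, ?_⟩
    simp only
    have hmem : x - sec R (residue R x) ∈ maximalIdeal R := by
      rw [mem_max_iff_residue, map_sub, residue_sec, sub_self]
    rw [mem_iff_pi_dvd hgen] at hmem
    have hspec : π * pdiv π (x - sec R (residue R x)) = x - sec R (residue R x) :=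
      pdiv_spec hmem
    have : π * sec R (residue R (pdiv π (x - sec R (residue R x))))
        = π * pdiv π (x - sec R (residue R x)) :=
      pi_mul_congr hgen hsq (by rw [residue_sec])
    rw [this, hspec]
    ring

include hgen hne hsq in
lemma srel_count_equiv :
    Nonempty ((R × ResidueField R × ResidueField R) ≃ Quot (srel π) × ResidueField R) := by
  have hex : ∀ x : R × ResidueField R × ResidueField R,
      ∃ c, x = act π c (Quot.out (Quot.mk (srel π) x)) := by
    intro x
    have h1 : Quot.mk (srel π) (Quot.out (Quot.mk (srel π) x)) = Quot.mk (srel π) x :=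
      Quot.out_eq _
    have h2 : srel π (Quot.out (Quot.mk (srel π) x)) x :=
      ((srel_equiv hgen hsq).eqvGen_iff).mp (Quot.eqvGen_exact h1)
    exact h2
  have huniq : ∀ (y : R × ResidueField R × ResidueField R) (c c' : ResidueField R),
      act π c y = act π c' y → c = c' := by
    intro y c c' h
    have h1 := congrArg Prod.fst h
    simp only [act] at h1
    exact theta_inj hgen hne hsq (add_left_cancel h1)
  refine ⟨Equiv.ofBijective
    (fun x => (Quot.mk (srel π) x, Classical.choose (hex x))) ⟨?_, ?_⟩⟩
  · intro x y h
    simp only [Prod.mk.injEq] at h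
    obtain ⟨h1, h2⟩ := h
    have hx := Classical.choose_spec (hex x)
    have hy := Classical.choose_spec (hex y)
    set cx := Classical.choose (hex x) with hcx
    set cy := Classical.choose (hex y) with hcy
    have hout : (Quot.mk (srel π) x).out = (Quot.mk (srel π) y).out := by rw [h1]
    calc x = act π cx (Quot.mk (srel π) x).out := hx
      _ = act π cy (Quot.mk (srel π) y).out := by rw [h2, hout]
      _ = y := hy.symm
  · rintro ⟨w, c⟩
    refine ⟨act π c (Quot.out w), ?_⟩
    have hmk : Quot.mk (srel π) (act π c (Quot.out w)) = w := by
      have : srel π (Quot.out w) (act π c (Quot.out w)) := ⟨c, rfl⟩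
      rw [← Quot.sound this, Quot.out_eq]
    simp only [Prod.mk.injEq]
    refine ⟨hmk, ?_⟩
    have hx := Classical.choose_spec (hex (act π c (Quot.out w)))
    set c0 := Classical.choose (hex (act π c (Quot.out w))) with hc0
    rw [hmk] at hx
    exact huniq _ _ _ hx.symm

end count

end Stmt12

/-- For a finite local principal ideal ring `R` of length two with
residue field of cardinality `q`, the number of similarity classes in `M₂(R)` equals
`q⁴ + q³ + q²`. -/
theorem stmt12 {R : Type*} [CommRing R] [IsLocalRing R] [Finite R]
    (hprinc : (maximalIdeal R).IsPrincipal) (hne : maximalIdeal R ≠ ⊥)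
    (hsq : maximalIdeal R ^ 2 = ⊥) (q : ℕ) (hq : Nat.card (ResidueField R) = q) :
    Nat.card (Quot fun A B : Matrix (Fin 2) (Fin 2) R =>
        ∃ g : GL (Fin 2) R,
          (g : Matrix (Fin 2) (Fin 2) R) * A * (g⁻¹ : GL (Fin 2) R) = B) =
      q ^ 4 + q ^ 3 + q ^ 2 := by
  obtain ⟨⟨π, hgen0⟩⟩ := hprinc
  have hgen : maximalIdeal R = Ideal.span {π} := by
    rw [hgen0, Ideal.submodule_span_eq]
  haveI : Finite (ResidueField R) :=
    Finite.of_surjective _ IsLocalRing.residue_surjective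
  haveI : Finite (Quot (Stmt12.srel π)) :=
    Finite.of_surjective (Quot.mk _) (fun x => Quot.exists_rep x)
  haveI : Finite (Quot (Stmt12.sim (R := R))) :=
    Finite.of_surjective (Quot.mk _) (fun x => Quot.exists_rep x)
  have hq0 : 0 < q := by
    rw [← hq]; exact Nat.card_pos
  have hrel : (fun A B : Matrix (Fin 2) (Fin 2) R =>
      ∃ g : GL (Fin 2) R,
        (g : Matrix (Fin 2) (Fin 2) R) * A * (g⁻¹ : GL (Fin 2) R) = B)
      = Stmt12.sim := by
    funext A B
    apply propext
    exact ⟨fun ⟨g, h⟩ => ⟨g, h⟩, fun ⟨g, h⟩ => ⟨g, h⟩⟩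
  rw [hrel]
  obtain ⟨e⟩ := Stmt12.quot_equiv hgen hne hsq
  obtain ⟨eR⟩ := Stmt12.R_equiv hgen hne hsq
  obtain ⟨eS⟩ := Stmt12.srel_count_equiv hgen hne hsq
  have hcardR : Nat.card R = q * q := by
    rw [← Nat.card_congr eR, Nat.card_prod, hq]
  have hcardS : Nat.card (Quot (Stmt12.srel π)) * q = q * q * (q * q) := by
    have h1 := Nat.card_congr eS
    rw [Nat.card_prod, Nat.card_prod, Nat.card_prod, hq, hcardR] at h1
    omega
  have hS : Nat.card (Quot (Stmt12.srel π)) = q ^ 3 := by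
    have h4 : q * q * (q * q) = q ^ 3 * q := by ring
    rw [h4] at hcardS
    exact Nat.eq_of_mul_eq_mul_right hq0 hcardS
  rw [Nat.card_congr e, Nat.card_sum, Nat.card_sum, Nat.card_prod, hcardR, hS]
  ring
end
end
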